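/- arXiv:2208.11528 — 3 statements merged into one kernel-verified Lean document; each statement's English description precedes it below -/
import Mathlib

section
/- Branching property: let f be an excursion, let u,v ∈ [0,1] with u ≺_f v and f(u−)=f(v−). Define g(t)=f(t) for t∉[u,v) and g(t)=f(u−) for t∈[u,v); define h(t)=f(u+t(v−u))−f(u−) for t∈[0,1) and h(1)=0. Then g and h are excursions, and for all s,t ∈ [0,1) and all a,b ∈ [0,1]∖[u,v): d_L[f](a,b)=d_L[g](a,b), d_L[f](u+s(v−u), u+t(v−u))=d_L[h](s,t), and d_L[f](u+s(v−u), a)=d_L[g](a,u)+d_L[h](s,1). The same three identities hold with d_T in place of d_L. -/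
open Set Filter Topology
open scoped Classical

noncomputable section

/-- Left limit of `f` at `t`, with the convention `f(0−) = 0`. -/
def lm (f : ℝ → ℝ) (t : ℝ) : ℝ := if t = 0 then 0 else Function.leftLim f t

/-- The jump `Δ_t(f) = f t − f(t−)`. -/
def jump (f : ℝ → ℝ) (t : ℝ) : ℝ := f t - lm f t

/-- `inf_{[s,t]} f`. -/
def infIcc (f : ℝ → ℝ) (s t : ℝ) : ℝ := sInf (f '' Icc s t)

/-- An excursion: a càdlàg function on `[0,1]`, nonnegative, vanishing at `1` (and
extended by `0` outside `[0,1]`), all of whose jumps are nonnegative. -/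
structure IsExcursion (f : ℝ → ℝ) : Prop where
  nonneg : ∀ t ∈ Icc (0:ℝ) 1, 0 ≤ f t
  zero_outside : ∀ t, t ∉ Icc (0:ℝ) 1 → f t = 0
  rightCont : ∀ t ∈ Ico (0:ℝ) 1, Tendsto f (𝓝[>] t) (𝓝 (f t))
  leftLimEx : ∀ t ∈ Ioc (0:ℝ) 1, Tendsto f (𝓝[<] t) (𝓝 (Function.leftLim f t))
  one : f 1 = 0
  jump_nonneg : ∀ t ∈ Icc (0:ℝ) 1, 0 ≤ jump f t

/-- The genealogical relation `s ⪯_f t` : `s ≤ t` and `f(s−) ≤ inf_{[s,t]} f`. -/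
def pre (f : ℝ → ℝ) (s t : ℝ) : Prop := s ≤ t ∧ lm f s ≤ infIcc f s t

/-- `x_s^t(f) = 1_{s ≤ t} · max(inf_{[s,t]} f − f(s−), 0)`. -/
def xst (f : ℝ → ℝ) (s t : ℝ) : ℝ := if s ≤ t then max (infIcc f s t - lm f s) 0 else 0

/-- The most recent common ancestor `s ∧_f t`. -/
def mrca (f : ℝ → ℝ) (s t : ℝ) : ℝ := sSup {r : ℝ | 0 ≤ r ∧ pre f r s ∧ pre f r t}

/-- `δ_t(a,b) = min(|a−b|, Δ_t(f) − |a−b|)`, the circle pseudo-distance on `[0, Δ_t(f)]`. -/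
def cdel (f : ℝ → ℝ) (t a b : ℝ) : ℝ := min |a - b| (jump f t - |a - b|)

/-- `d_O(s,t) = ∑_{s ≺_f r ⪯_f t} δ_r(0, x_r^t)`. -/
def dO (f : ℝ → ℝ) (s t : ℝ) : ℝ :=
  ∑' r : ℝ, if pre f s r ∧ s < r ∧ pre f r t then cdel f r 0 (xst f r t) else 0

/-- `d_T(s,t) = f t − inf_{[s,t]} f − ∑_{s ≺_f r ⪯_f t} x_r^t`, intended for `s ⪯_f t`. -/
def dTanc (f : ℝ → ℝ) (s t : ℝ) : ℝ :=
  f t - infIcc f s t - ∑' r : ℝ, if pre f s r ∧ s < r ∧ pre f r t then xst f r t else 0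

/-- The looptree pseudo-distance `d_L[f]`. -/
def dL (f : ℝ → ℝ) (s t : ℝ) : ℝ :=
  cdel f (mrca f s t) (xst f (mrca f s t) s) (xst f (mrca f s t) t)
    + dO f (mrca f s t) s + dO f (mrca f s t) t

/-- The tree pseudo-distance `d_T[f]`. -/
def dT (f : ℝ → ℝ) (s t : ℝ) : ℝ := dTanc f (mrca f s t) s + dTanc f (mrca f s t) t

/-- The vernation pseudo-distance `d_V[f] = d_T[f] + 2·d_L[f]`. -/
def dV (f : ℝ → ℝ) (s t : ℝ) : ℝ := dT f s t + 2 * dL f s t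

/-- `Jf(t) = ∑_{r ⪯_f t} x_r^t(f)`. -/
def Jop (f : ℝ → ℝ) (t : ℝ) : ℝ := ∑' r : ℝ, if pre f r t then xst f r t else 0

/-- `J^ε f(t) = ∑_{r ⪯_f t, Δ_r(f) ≥ ε} x_r^t(f)`. -/
def Jeps (f : ℝ → ℝ) (ε : ℝ) (t : ℝ) : ℝ :=
  ∑' r : ℝ, if pre f r t ∧ ε ≤ jump f r then xst f r t else 0

/-- Pure jump growth (PJG) excursion: `f(t) = ∑_{r ⪯_f t} x_r^t(f)` on `[0,1]`. -/
def IsPJG (f : ℝ → ℝ) : Prop := ∀ t ∈ Icc (0:ℝ) 1, f t = Jop f t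

/-- An increasing bijection from `[0,1]` onto itself. -/
def IncBij (l : ℝ → ℝ) : Prop :=
  StrictMonoOn l (Icc (0:ℝ) 1) ∧ Set.BijOn l (Icc (0:ℝ) 1) (Icc (0:ℝ) 1)

/-- The Skorokhod distance `ρ` on functions `[0,1] → ℝ`. -/
def skor (f g : ℝ → ℝ) : ℝ :=
  sInf {c : ℝ | 0 ≤ c ∧ ∃ l : ℝ → ℝ, IncBij l ∧
    ∀ x ∈ Icc (0:ℝ) 1, |l x - x| ≤ c ∧ |f x - g (l x)| ≤ c}

namespace Aux

variable {φ : ℝ → ℝ}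

theorem exc_nonneg (hφ : IsExcursion φ) (t : ℝ) : 0 ≤ φ t := by
  by_cases ht : t ∈ Icc (0:ℝ) 1
  · exact hφ.nonneg t ht
  · rw [hφ.zero_outside t ht]

theorem bddBelow_img (hφ : IsExcursion φ) (p q : ℝ) : BddBelow (φ '' Icc p q) :=
  ⟨0, by rintro y ⟨x, -, rfl⟩; exact exc_nonneg hφ x⟩

theorem infIcc_le (hφ : IsExcursion φ) {p q x : ℝ} (hx : x ∈ Icc p q) : infIcc φ p q ≤ φ x :=
  csInf_le (bddBelow_img hφ p q) ⟨x, hx, rfl⟩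

theorem le_infIcc {p q : ℝ} (hpq : p ≤ q) {A : ℝ} (H : ∀ x ∈ Icc p q, A ≤ φ x) :
    A ≤ infIcc φ p q :=
  le_csInf (Set.Nonempty.image φ (nonempty_Icc.2 hpq))
    (by rintro y ⟨x, hx, rfl⟩; exact H x hx)

theorem infIcc_nonneg (hφ : IsExcursion φ) (p q : ℝ) : 0 ≤ infIcc φ p q := by
  by_cases hpq : p ≤ q
  · exact le_infIcc hpq fun x _ => exc_nonneg hφ x
  · rw [infIcc, Icc_eq_empty hpq]; simp [Real.sInf_empty]

theorem infIcc_mono (hφ : IsExcursion φ) {p q p' q' : ℝ} (hp : p' ≤ p) (hq : q ≤ q')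
    (hpq : p ≤ q) : infIcc φ p' q' ≤ infIcc φ p q :=
  le_infIcc hpq fun x hx => infIcc_le hφ ⟨le_trans hp hx.1, le_trans hx.2 hq⟩

theorem infIcc_split (hφ : IsExcursion φ) {p q r : ℝ} (hpq : p ≤ q) (hqr : q ≤ r) :
    infIcc φ p r = min (infIcc φ p q) (infIcc φ q r) := by
  apply le_antisymm
  · exact le_min (infIcc_mono hφ le_rfl hqr hpq) (infIcc_mono hφ hpq le_rfl hqr)
  · apply le_infIcc (le_trans hpq hqr)
    intro x hx
    by_cases hxq : x ≤ q
    · exact le_trans (min_le_left _ _) (infIcc_le hφ ⟨hx.1, hxq⟩)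
    · exact le_trans (min_le_right _ _) (infIcc_le hφ ⟨le_of_not_ge hxq, hx.2⟩)

theorem infIcc_self (hφ : IsExcursion φ) (r : ℝ) : infIcc φ r r = φ r :=
  le_antisymm (infIcc_le hφ ⟨le_rfl, le_rfl⟩)
    (le_infIcc le_rfl (fun x hx => le_of_eq (congrArg φ (le_antisymm hx.2 hx.1).symm)))

theorem lm_zero : lm φ 0 = 0 := if_pos rfl

theorem tendsto_lm (hφ : IsExcursion φ) {t : ℝ} (ht : t ≠ 0) :
    Tendsto φ (𝓝[<] t) (𝓝 (lm φ t)) := by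
  rcases lt_or_gt_of_ne ht with htneg | htpos
  · -- t < 0 : φ = 0 on Iio t
    have hev : ∀ᶠ y in 𝓝[<] t, φ y = 0 := by
      filter_upwards [self_mem_nhdsWithin] with y hy
      exact hφ.zero_outside y (by simp only [mem_Icc]; push_neg; intro h0; linarith [mem_Iio.1 hy])
    have htd : Tendsto φ (𝓝[<] t) (𝓝 0) := Tendsto.congr' (hev.mono fun y h => h.symm) tendsto_const_nhds
    have : Function.leftLim φ t = 0 :=
      leftLim_eq_of_tendsto htd
    rw [lm, if_neg ht, this]; exact htd
  · by_cases ht1 : t ≤ 1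
    · rw [lm, if_neg ht]; exact hφ.leftLimEx t ⟨htpos, ht1⟩
    · push_neg at ht1
      have hev : ∀ᶠ y in 𝓝[<] t, φ y = 0 := by
        filter_upwards [Ioo_mem_nhdsLT_of_mem (show t ∈ Ioc (1:ℝ) t from ⟨ht1, le_rfl⟩)] with y hy
        exact hφ.zero_outside y (by simp only [mem_Icc]; push_neg; intro h0; linarith [hy.1])
      have htd : Tendsto φ (𝓝[<] t) (𝓝 0) := Tendsto.congr' (hev.mono fun y h => h.symm) tendsto_const_nhds
      have : Function.leftLim φ t = 0 :=
        leftLim_eq_of_tendsto htd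
      rw [lm, if_neg ht, this]; exact htd

theorem lm_nonneg (hφ : IsExcursion φ) (t : ℝ) : 0 ≤ lm φ t := by
  by_cases ht : t = 0
  · rw [ht, lm_zero]
  · exact ge_of_tendsto (tendsto_lm hφ ht) (Eventually.of_forall fun x => exc_nonneg hφ x)

/-- `inf_{[p,q]} φ ≤ φ(t−)` whenever `p < t ≤ q`. -/
theorem infIcc_le_lm (hφ : IsExcursion φ) {p t q : ℝ} (hpt : p < t) (htq : t ≤ q) (ht : t ≠ 0) :
    infIcc φ p q ≤ lm φ t := by
  apply ge_of_tendsto (tendsto_lm hφ ht)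
  filter_upwards [Ioo_mem_nhdsLT_of_mem (show t ∈ Ioc p t from ⟨hpt, le_rfl⟩)] with x hx
  exact infIcc_le hφ ⟨le_of_lt hx.1, le_trans (le_of_lt hx.2) htq⟩

/-- Lower bounds on values left of `t` pass to the left limit. -/
theorem le_lm (hφ : IsExcursion φ) {A p t : ℝ} (hpt : p < t) (ht : t ≠ 0)
    (H : ∀ x ∈ Ioo p t, A ≤ φ x) : A ≤ lm φ t := by
  apply ge_of_tendsto (tendsto_lm hφ ht)
  filter_upwards [Ioo_mem_nhdsLT_of_mem (show t ∈ Ioc p t from ⟨hpt, le_rfl⟩)] with x hx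
  exact H x hx

theorem zero_mem_anc (hφ : IsExcursion φ) {s t : ℝ} (hs : 0 ≤ s) (ht : 0 ≤ t) :
    (0:ℝ) ∈ {r : ℝ | 0 ≤ r ∧ pre φ r s ∧ pre φ r t} :=
  ⟨le_rfl, ⟨hs, by rw [lm_zero]; exact infIcc_nonneg hφ 0 s⟩,
    ⟨ht, by rw [lm_zero]; exact infIcc_nonneg hφ 0 t⟩⟩

theorem bddAbove_anc (s t : ℝ) : BddAbove {r : ℝ | 0 ≤ r ∧ pre φ r s ∧ pre φ r t} :=
  ⟨s, fun r hr => hr.2.1.1⟩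

theorem mrca_nonneg (hφ : IsExcursion φ) {s t : ℝ} (hs : 0 ≤ s) (ht : 0 ≤ t) :
    0 ≤ mrca φ s t :=
  le_csSup (bddAbove_anc s t) (zero_mem_anc hφ hs ht)

theorem mrca_le_left (hφ : IsExcursion φ) {s t : ℝ} (hs : 0 ≤ s) (ht : 0 ≤ t) :
    mrca φ s t ≤ s :=
  csSup_le ⟨0, zero_mem_anc hφ hs ht⟩ fun r hr => hr.2.1.1

theorem mrca_le_right (hφ : IsExcursion φ) {s t : ℝ} (hs : 0 ≤ s) (ht : 0 ≤ t) :
    mrca φ s t ≤ t :=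
  csSup_le ⟨0, zero_mem_anc hφ hs ht⟩ fun r hr => hr.2.2.1

/-- The MRCA is itself a common ancestor. -/
theorem mrca_spec (hφ : IsExcursion φ) {s t : ℝ} (hs : s ∈ Icc (0:ℝ) 1)
    (ht : t ∈ Icc (0:ℝ) 1) :
    pre φ (mrca φ s t) s ∧ pre φ (mrca φ s t) t := by
  set S := {r : ℝ | 0 ≤ r ∧ pre φ r s ∧ pre φ r t} with hSdef
  have h0S : (0:ℝ) ∈ S := zero_mem_anc hφ hs.1 ht.1
  have hne : S.Nonempty := ⟨0, h0S⟩
  have hbdd : BddAbove S := bddAbove_anc s t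
  have hm0 : 0 ≤ mrca φ s t := mrca_nonneg hφ hs.1 ht.1
  have main : ∀ w, mrca φ s t ≤ w → (∀ r ∈ S, lm φ r ≤ infIcc φ r w) → pre φ (mrca φ s t) w := by
    intro w hmw hanc
    refine ⟨hmw, le_infIcc hmw ?_⟩
    intro x hx
    by_cases hmem : mrca φ s t ∈ S
    · exact le_trans (hanc _ hmem) (infIcc_le hφ hx)
    · have hm0' : 0 < mrca φ s t := by
        rcases eq_or_lt_of_le hm0 with h | h
        · exact absurd (h ▸ h0S) hmem
        · exact h
      apply le_of_forall_pos_le_add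
      intro ε hε
      have htd := tendsto_lm hφ (ne_of_gt hm0')
      have hev : ∀ᶠ y in 𝓝[<] (mrca φ s t), |φ y - lm φ (mrca φ s t)| < ε / 2 := by
        have h2 : (0:ℝ) < ε / 2 := by linarith
        have := Metric.tendsto_nhds.mp htd (ε/2) h2
        filter_upwards [this] with y hy
        rwa [Real.dist_eq] at hy
      obtain ⟨A, hA, hsub⟩ := mem_nhdsLT_iff_exists_Ioo_subset.mp hev
      have hmax : max A 0 < mrca φ s t := max_lt hA hm0'
      obtain ⟨r, hrS, hr⟩ := exists_lt_of_lt_csSup hne hmax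
      have hrm : r ≤ mrca φ s t := le_csSup hbdd hrS
      have hrm' : r < mrca φ s t := lt_of_le_of_ne hrm (fun h => hmem (h ▸ hrS))
      have hAr : A < r := lt_of_le_of_lt (le_max_left A 0) hr
      have hr0 : r ≠ 0 := ne_of_gt (lt_of_le_of_lt (le_max_right A 0) hr)
      have h1 : lm φ (mrca φ s t) - ε/2 ≤ lm φ r := by
        apply le_lm hφ hAr hr0
        intro y hy
        have hy' : |φ y - lm φ (mrca φ s t)| < ε / 2 := hsub ⟨hy.1, lt_trans hy.2 hrm'⟩
        have := abs_lt.mp hy'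
        linarith [this.1]
      have h2 : lm φ r ≤ φ x := by
        refine le_trans (hanc r hrS) (infIcc_le hφ ⟨le_trans hrm hx.1, hx.2⟩)
      linarith
  exact ⟨main s (mrca_le_left hφ hs.1 ht.1) (fun r hr => hr.2.1.2),
    main t (mrca_le_right hφ hs.1 ht.1) (fun r hr => hr.2.2.2)⟩


theorem xst_nonneg (f : ℝ → ℝ) (r t : ℝ) : 0 ≤ xst f r t := by
  unfold xst; split
  · exact le_max_right _ _
  · exact le_rfl

theorem xst_eq (f : ℝ → ℝ) {r t : ℝ} (h : pre f r t) :
    xst f r t = infIcc f r t - lm f r := by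
  rw [xst, if_pos h.1]; exact max_eq_left (by linarith [h.2])

theorem xst_le_jump (hφ : IsExcursion φ) {r : ℝ} (hr0 : 0 ≤ r) (hr1 : r ≤ 1) (τ' : ℝ) :
    xst φ r τ' ≤ jump φ r := by
  have hj : 0 ≤ jump φ r := hφ.jump_nonneg r ⟨hr0, hr1⟩
  unfold xst; split
  · rename_i hrτ
    apply max_le _ hj
    have : infIcc φ r τ' ≤ φ r := infIcc_le hφ ⟨le_rfl, hrτ⟩
    unfold jump; linarith
  · exact hj

theorem abs_zero_sub (x : ℝ) (hx : 0 ≤ x) : |(0:ℝ) - x| = x := by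
  rw [zero_sub, abs_neg, abs_of_nonneg hx]

theorem cdel_xst_le (f : ℝ → ℝ) (r t : ℝ) : cdel f r 0 (xst f r t) ≤ xst f r t := by
  rw [cdel, abs_zero_sub _ (xst_nonneg f r t)]; exact min_le_left _ _

theorem cdel_xst_nonneg (hφ : IsExcursion φ) {r : ℝ} (hr0 : 0 ≤ r) (hr1 : r ≤ 1) (t : ℝ) :
    0 ≤ cdel φ r 0 (xst φ r t) := by
  rw [cdel, abs_zero_sub _ (xst_nonneg φ r t)]
  exact le_min (xst_nonneg φ r t) (by linarith [xst_le_jump hφ hr0 hr1 t])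

theorem cdel_zero_zero {f : ℝ → ℝ} {r : ℝ} (h : 0 ≤ jump f r) : cdel f r 0 0 = 0 := by
  rw [cdel]; simp [h]

theorem cdel_comm (f : ℝ → ℝ) (t a b : ℝ) : cdel f t a b = cdel f t b a := by
  rw [cdel, cdel, abs_sub_comm]

/-- Partial sums of the `xst` summand are bounded by `φ τ`. -/
theorem sum_xterm_le (hφ : IsExcursion φ) {σ τ : ℝ} (hσ : 0 ≤ σ) (hτ : τ ≤ 1)
    (T : Finset ℝ) :
    ∑ r ∈ T, (if pre φ σ r ∧ σ < r ∧ pre φ r τ then xst φ r τ else 0) ≤ φ τ := by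
  classical
  set F := fun r => if pre φ σ r ∧ σ < r ∧ pre φ r τ then xst φ r τ else 0 with hF
  have hFval : ∀ r, F r ≠ 0 → (pre φ σ r ∧ σ < r ∧ pre φ r τ) ∧
      F r = infIcc φ r τ - lm φ r := by
    intro r hr
    have hcond : pre φ σ r ∧ σ < r ∧ pre φ r τ := by
      by_contra hc; exact hr (if_neg hc)
    exact ⟨hcond, by rw [hF]; simp only [if_pos hcond]; exact xst_eq φ hcond.2.2⟩
  have Q : ∀ T : Finset ℝ, ∀ β, 0 < β → β ≤ τ → (∀ r ∈ T, F r ≠ 0 → r < β) →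
      ∑ r ∈ T, F r ≤ lm φ β := by
    intro T
    induction T using Finset.induction_on_max with
    | empty => intro β hβ0 _ _; simpa using lm_nonneg hφ β
    | insert a s hs ih =>
      intro β hβ0 hβτ hlt
      rw [Finset.sum_insert (fun ha => lt_irrefl a (hs a ha))]
      by_cases hFa : F a = 0
      · rw [hFa, zero_add]
        exact ih β hβ0 hβτ (fun r hr hFr => hlt r (Finset.mem_insert_of_mem hr) hFr)
      · obtain ⟨hcond, hFa'⟩ := hFval a hFa
        have ha0 : 0 < a := lt_of_le_of_lt hσ hcond.2.1
        have haτ : a ≤ τ := hcond.2.2.1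
        have haβ : a < β := hlt a (Finset.mem_insert_self a s) hFa
        have h1 : ∑ r ∈ s, F r ≤ lm φ a := ih a ha0 haτ (fun r hr _ => hs r hr)
        have h2 : infIcc φ a τ ≤ lm φ β := infIcc_le_lm hφ haβ hβτ (ne_of_gt hβ0)
        rw [hFa']; linarith
  by_cases hact : ∀ r ∈ T, F r = 0
  · rw [Finset.sum_eq_zero hact]; exact exc_nonneg hφ τ
  · push_neg at hact
    obtain ⟨r₀, hr₀T, hr₀⟩ := hact
    set T' := T.filter (fun r => F r ≠ 0) with hT'
    have hsum : ∑ r ∈ T', F r = ∑ r ∈ T, F r := Finset.sum_filter_ne_zero T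
    have hT'ne : T'.Nonempty := ⟨r₀, Finset.mem_filter.2 ⟨hr₀T, hr₀⟩⟩
    set b := T'.max' hT'ne with hb
    have hbT' : b ∈ T' := T'.max'_mem hT'ne
    have hbF : F b ≠ 0 := (Finset.mem_filter.1 hbT').2
    obtain ⟨hcondb, hFb⟩ := hFval b hbF
    have hb0 : 0 < b := lt_of_le_of_lt hσ hcondb.2.1
    have hbτ : b ≤ τ := hcondb.2.2.1
    rw [← hsum, ← Finset.add_sum_erase T' F hbT']
    have h1 : ∑ r ∈ T'.erase b, F r ≤ lm φ b := by
      apply Q _ b hb0 hbτ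
      intro r hr _
      exact lt_of_le_of_ne (T'.le_max' r (Finset.mem_of_mem_erase hr)) (Finset.ne_of_mem_erase hr)
    have h2 : infIcc φ b τ ≤ φ τ := infIcc_le hφ ⟨hbτ, le_rfl⟩
    rw [hFb]; linarith

theorem xterm_nonneg (φ : ℝ → ℝ) (σ τ : ℝ) :
    (0:ℝ → ℝ) ≤ fun r => if pre φ σ r ∧ σ < r ∧ pre φ r τ then xst φ r τ else 0 := by
  intro r; simp only [Pi.zero_apply]
  split
  · exact xst_nonneg φ r τ
  · exact le_rfl

theorem summable_xterm (hφ : IsExcursion φ) {σ τ : ℝ} (hσ : 0 ≤ σ) (hτ : τ ≤ 1) :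
    Summable (fun r => if pre φ σ r ∧ σ < r ∧ pre φ r τ then xst φ r τ else 0) :=
  summable_of_sum_le (xterm_nonneg φ σ τ) (sum_xterm_le hφ hσ hτ)

theorem cterm_le_xterm (φ : ℝ → ℝ) (σ τ r : ℝ) :
    (if pre φ σ r ∧ σ < r ∧ pre φ r τ then cdel φ r 0 (xst φ r τ) else 0) ≤
      (if pre φ σ r ∧ σ < r ∧ pre φ r τ then xst φ r τ else 0) := by
  split
  · exact cdel_xst_le φ r τ
  · exact le_rfl

theorem cterm_nonneg (hφ : IsExcursion φ) {σ τ : ℝ} (hσ : 0 ≤ σ) (hτ : τ ≤ 1) :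
    (0:ℝ → ℝ) ≤ fun r => if pre φ σ r ∧ σ < r ∧ pre φ r τ then cdel φ r 0 (xst φ r τ) else 0 := by
  intro r; simp only [Pi.zero_apply]
  split
  · rename_i hcond
    exact cdel_xst_nonneg hφ (le_trans hσ (le_of_lt hcond.2.1))
      (le_trans hcond.2.2.1 hτ) τ
  · exact le_rfl

theorem summable_cterm (hφ : IsExcursion φ) {σ τ : ℝ} (hσ : 0 ≤ σ) (hτ : τ ≤ 1) :
    Summable (fun r => if pre φ σ r ∧ σ < r ∧ pre φ r τ then cdel φ r 0 (xst φ r τ) else 0) :=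
  summable_of_sum_le (cterm_nonneg hφ hσ hτ)
    (fun T => le_trans (Finset.sum_le_sum fun r _ => cterm_le_xterm φ σ τ r)
      (sum_xterm_le hφ hσ hτ T))

end Aux

/-- The affine map `t ↦ u + t(v-u)`. -/
def eAff (u v t : ℝ) : ℝ := u + t * (v - u)

/-- All the context of the branching theorem. -/
structure Ctx (f g h : ℝ → ℝ) (u v : ℝ) : Prop where
  hf : IsExcursion f
  hu : u ∈ Icc (0:ℝ) 1
  hv : v ∈ Icc (0:ℝ) 1
  huv : pre f u v
  hlt : u < v
  hlm : lm f u = lm f v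
  hg : ∀ t, g t = if t ∈ Ico u v then lm f u else f t
  hh : ∀ t, h t = if t ∈ Ico (0:ℝ) 1 then f (u + t * (v - u)) - lm f u else 0

namespace Ctx

open Aux

variable {f g h : ℝ → ℝ} {u v : ℝ} (C : Ctx f g h u v)
include C

theorem hw : 0 < v - u := by linarith [C.hlt]

theorem hu0 : 0 ≤ u := C.hu.1
theorem hv1 : v ≤ 1 := C.hv.2
theorem hv0 : 0 < v := lt_of_le_of_lt C.hu0 C.hlt

/-- `f ≥ f(u−)` on `[u,v]`. -/
theorem K1 : ∀ x ∈ Icc u v, lm f u ≤ f x :=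
  fun x hx => le_trans C.huv.2 (infIcc_le C.hf hx)

/-- inf over an interval reaching past `v` is at most `f(u−)`. -/
theorem inf_le_c_v {p q : ℝ} (hp : p < v) (hq : v ≤ q) : infIcc f p q ≤ lm f u := by
  rw [C.hlm]; exact infIcc_le_lm C.hf hp hq (ne_of_gt C.hv0)

/-- inf over an interval reaching past `u` (with `u > 0`) is at most `f(u−)`. -/
theorem inf_le_c_u {p q : ℝ} (hp0 : 0 ≤ p) (hp : p < u) (hq : u ≤ q) : infIcc f p q ≤ lm f u :=
  infIcc_le_lm C.hf hp hq (ne_of_gt (lt_of_le_of_lt hp0 hp))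

theorem c_nonneg : 0 ≤ lm f u := lm_nonneg C.hf u

/-- `inf_{[p,v]} f = f(u−)` for `u ≤ p < v`. -/
theorem inf_pv_eq_c {p : ℝ} (hp : u ≤ p) (hpv : p < v) : infIcc f p v = lm f u :=
  le_antisymm (C.inf_le_c_v hpv le_rfl)
    (le_infIcc (le_of_lt hpv) fun x hx => C.K1 x ⟨le_trans hp hx.1, hx.2⟩)

/-- `f(t−) ≥ f(u−)` for `t ∈ (u,v]`. -/
theorem c_le_lm {t : ℝ} (hut : u < t) (htv : t ≤ v) : lm f u ≤ lm f t := by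
  apply le_lm C.hf hut (ne_of_gt (lt_of_le_of_lt C.hu0 hut))
  intro x hx
  exact C.K1 x ⟨le_of_lt hx.1, le_trans (le_of_lt hx.2) htv⟩

/- ------------  g  ------------ -/

theorem g_eq {t : ℝ} (ht : t ∉ Ico u v) : g t = f t := by rw [C.hg, if_neg ht]
theorem g_eqc {t : ℝ} (ht : t ∈ Ico u v) : g t = lm f u := by rw [C.hg, if_pos ht]
theorem g_eq_lt {t : ℝ} (ht : t < u) : g t = f t := C.g_eq (fun hc => absurd hc.1 (not_le.2 ht))
theorem g_eq_ge {t : ℝ} (ht : v ≤ t) : g t = f t := C.g_eq (fun hc => absurd hc.2 (not_lt.2 ht))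
theorem g_eq_v : g v = f v := C.g_eq_ge le_rfl

theorem lm_g_out {t : ℝ} (ht : t ∉ Ioc u v) : lm g t = lm f t := by
  by_cases ht0 : t = 0
  · rw [ht0, lm_zero, lm_zero]
  · have hev : ∀ᶠ x in 𝓝[<] t, g x = f x := by
      rcases not_and_or.mp (fun hc : u < t ∧ t ≤ v => ht hc) with h1 | h2
      · push_neg at h1
        filter_upwards [self_mem_nhdsWithin] with x hx
        exact C.g_eq_lt (lt_of_lt_of_le (mem_Iio.1 hx) h1)
      · push_neg at h2
        filter_upwards [Ioo_mem_nhdsLT_of_mem (show t ∈ Ioc v t from ⟨h2, le_rfl⟩)] with x hx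
        exact C.g_eq_ge (le_of_lt hx.1)
    have htd : Tendsto g (𝓝[<] t) (𝓝 (lm f t)) :=
      (tendsto_lm C.hf ht0).congr' (hev.mono fun x hx => hx.symm)
    rw [lm, if_neg ht0]
    exact leftLim_eq_of_tendsto htd

theorem tendsto_lm_g_in {t : ℝ} (ht : t ∈ Ioc u v) : Tendsto g (𝓝[<] t) (𝓝 (lm f u)) := by
  have hev : ∀ᶠ x in 𝓝[<] t, g x = lm f u := by
    filter_upwards [Ioo_mem_nhdsLT_of_mem (show t ∈ Ioc u t from ⟨ht.1, le_rfl⟩)] with x hx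
    exact C.g_eqc ⟨le_of_lt hx.1, lt_of_lt_of_le hx.2 ht.2⟩
  exact Tendsto.congr' (hev.mono fun x hx => hx.symm) tendsto_const_nhds

theorem lm_g_in {t : ℝ} (ht : t ∈ Ioc u v) : lm g t = lm f u := by
  have ht0 : t ≠ 0 := ne_of_gt (lt_of_le_of_lt C.hu0 ht.1)
  rw [lm, if_neg ht0]
  exact leftLim_eq_of_tendsto (C.tendsto_lm_g_in ht)

theorem lm_g_v : lm g v = lm f v := by rw [C.lm_g_in ⟨C.hlt, le_rfl⟩, C.hlm]

theorem jump_g_out {t : ℝ} (ht : t ∉ Ico u v) : jump g t = jump f t := by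
  rcases not_and_or.mp (fun hc : u ≤ t ∧ t < v => ht hc) with h1 | h2
  · push_neg at h1
    rw [jump, jump, C.g_eq_lt h1, C.lm_g_out (fun hc => absurd hc.1 (not_lt.2 (le_of_lt h1)))]
  · push_neg at h2
    rcases eq_or_lt_of_le h2 with rfl | h3
    · rw [jump, jump, C.g_eq_v, C.lm_g_v]
    · rw [jump, jump, C.g_eq_ge h2, C.lm_g_out (fun hc => absurd hc.2 (not_le.2 h3))]

theorem jump_g_in {t : ℝ} (ht : t ∈ Ico u v) : jump g t = 0 := by
  have hlmg : lm g t = lm f u := by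
    rcases eq_or_lt_of_le ht.1 with h1 | h1
    · rw [← h1]; exact C.lm_g_out (fun hc => absurd hc.1 (lt_irrefl u))
    · exact C.lm_g_in ⟨h1, le_of_lt ht.2⟩
  rw [jump, C.g_eqc ht, hlmg, sub_self]

theorem hexc_g : IsExcursion g := by
  constructor
  · intro t ht
    by_cases htm : t ∈ Ico u v
    · rw [C.g_eqc htm]; exact C.c_nonneg
    · rw [C.g_eq htm]; exact C.hf.nonneg t ht
  · intro t ht
    have htm : t ∉ Ico u v := by
      simp only [mem_Icc] at ht; push_neg at ht
      intro hc
      rcases lt_or_ge t 0 with h1 | h1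
      · exact absurd (le_trans C.hu0 hc.1) (not_le.2 h1)
      · linarith [hc.2, C.hv1, ht h1]
    rw [C.g_eq htm]; exact C.hf.zero_outside t ht
  · intro t ht
    rcases lt_or_ge t u with h1 | h1
    · -- g = f on a right neighborhood
      have hev : ∀ᶠ x in 𝓝[>] t, g x = f x := by
        filter_upwards [Ioo_mem_nhdsGT_of_mem (show t ∈ Ico t u from ⟨le_rfl, h1⟩)] with x hx
        exact C.g_eq_lt hx.2
      rw [C.g_eq_lt h1]
      exact (C.hf.rightCont t ht).congr' (hev.mono fun x hx => hx.symm)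
    · rcases lt_or_ge t v with h2 | h2
      · -- t ∈ [u, v): constant
        have hev : ∀ᶠ x in 𝓝[>] t, g x = lm f u := by
          filter_upwards [Ioo_mem_nhdsGT_of_mem (show t ∈ Ico t v from ⟨le_rfl, h2⟩)] with x hx
          exact C.g_eqc ⟨le_trans h1 (le_of_lt hx.1), hx.2⟩
        rw [C.g_eqc ⟨h1, h2⟩]
        exact Tendsto.congr' (hev.mono fun x hx => hx.symm) tendsto_const_nhds
      · have hev : ∀ᶠ x in 𝓝[>] t, g x = f x := by
          filter_upwards [self_mem_nhdsWithin] with x hx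
          exact C.g_eq_ge (le_trans h2 (le_of_lt (mem_Ioi.1 hx)))
        rw [C.g_eq (fun hc => absurd hc.2 (not_lt.2 h2))]
        exact (C.hf.rightCont t ht).congr' (hev.mono fun x hx => hx.symm)
  · intro t ht
    by_cases htm : t ∈ Ioc u v
    · have := C.tendsto_lm_g_in htm
      have hl : Function.leftLim g t =  lm f u :=
        leftLim_eq_of_tendsto this
      rw [hl]; exact this
    · have hne : t ≠ 0 := ne_of_gt ht.1
      have h3 : Function.leftLim g t = lm f t := by
        have h2 := C.lm_g_out htm
        rwa [lm, if_neg hne] at h2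
      rw [h3]
      rcases not_and_or.mp (fun hc : u < t ∧ t ≤ v => htm hc) with h1 | h3
      · push_neg at h1
        have hev : ∀ᶠ x in 𝓝[<] t, g x = f x := by
          filter_upwards [self_mem_nhdsWithin] with x hx
          exact C.g_eq_lt (lt_of_lt_of_le (mem_Iio.1 hx) h1)
        exact (tendsto_lm C.hf hne).congr' (hev.mono fun x hx => hx.symm)
      · push_neg at h3
        have hev : ∀ᶠ x in 𝓝[<] t, g x = f x := by
          filter_upwards [Ioo_mem_nhdsLT_of_mem (show t ∈ Ioc v t from ⟨h3, le_rfl⟩)] with x hx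
          exact C.g_eq_ge (le_of_lt hx.1)
        exact (tendsto_lm C.hf hne).congr' (hev.mono fun x hx => hx.symm)
  · rw [C.g_eq_ge C.hv1]; exact C.hf.one
  · intro t ht
    by_cases htm : t ∈ Ico u v
    · rw [C.jump_g_in htm]
    · rw [C.jump_g_out htm]; exact C.hf.jump_nonneg t ht

end Ctx
namespace Ctx

open Aux

variable {f g h : ℝ → ℝ} {u v : ℝ} (C : Ctx f g h u v)
include C

/-- infima of `f` and `g` agree over `[p,q]` whenever `q ∉ [u,v)`. -/
theorem infIcc_g {p q : ℝ} (hpq : p ≤ q) (hq : q ∉ Ico u v) : infIcc g p q = infIcc f p q := by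
  rcases not_and_or.mp (fun hc : u ≤ q ∧ q < v => hq hc) with h1 | h2
  · push_neg at h1
    have : g '' Icc p q = f '' Icc p q :=
      Set.image_congr fun x hx => C.g_eq (fun hc => absurd (le_trans hc.1 hx.2) (not_le.2 h1))
    rw [infIcc, infIcc, this]
  · push_neg at h2
    apply le_antisymm
    · apply le_infIcc hpq
      intro x hx
      by_cases hxm : x ∈ Ico u v
      · calc infIcc g p q ≤ g x := infIcc_le C.hexc_g hx
          _ = lm f u := C.g_eqc hxm
          _ ≤ f x := C.K1 x ⟨hxm.1, le_of_lt hxm.2⟩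
      · rw [← C.g_eq hxm]; exact infIcc_le C.hexc_g hx
    · apply le_infIcc hpq
      intro x hx
      by_cases hxm : x ∈ Ico u v
      · rw [C.g_eqc hxm]
        exact C.inf_le_c_v (lt_of_le_of_lt hx.1 hxm.2) h2
      · rw [C.g_eq hxm]; exact infIcc_le C.hf hx


theorem pre_g {r w : ℝ} (hr : r ∉ Ioc u v) (hw : w ∉ Ico u v) : pre g r w ↔ pre f r w := by
  unfold pre
  by_cases hrw : r ≤ w
  · rw [C.lm_g_out hr, C.infIcc_g hrw hw]
  · simp [hrw]

theorem xst_g {r w : ℝ} (hr : r ∉ Ioc u v) (hw : w ∉ Ico u v) : xst g r w = xst f r w := by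
  unfold xst
  by_cases hrw : r ≤ w
  · rw [if_pos hrw, if_pos hrw, C.lm_g_out hr, C.infIcc_g hrw hw]
  · rw [if_neg hrw, if_neg hrw]

/- ------------  h  ------------ -/

theorem e_mono : StrictMono (eAff u v) := by
  intro a b hab
  unfold eAff
  have := C.hw
  nlinarith

theorem e_le_iff {a b : ℝ} : eAff u v a ≤ eAff u v b ↔ a ≤ b := C.e_mono.le_iff_le
theorem e_lt_iff {a b : ℝ} : eAff u v a < eAff u v b ↔ a < b := C.e_mono.lt_iff_lt

theorem e_zero : eAff u v 0 = u := by unfold eAff; ring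
theorem e_one : eAff u v 1 = v := by unfold eAff; ring

theorem e_inv (y : ℝ) : eAff u v ((y - u) / (v - u)) = y := by
  have hne : v - u ≠ 0 := ne_of_gt C.hw
  unfold eAff; field_simp; ring

theorem e_inv' (t : ℝ) : (eAff u v t - u) / (v - u) = t := by
  have hne : v - u ≠ 0 := ne_of_gt C.hw
  unfold eAff; field_simp; ring

theorem u_le_e {t : ℝ} (ht : 0 ≤ t) : u ≤ eAff u v t := by
  have h := (C.e_le_iff (a := 0) (b := t)).mpr ht
  rwa [C.e_zero] at h

theorem u_lt_e {t : ℝ} (ht : 0 < t) : u < eAff u v t := by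
  have h := (C.e_lt_iff (a := 0) (b := t)).mpr ht
  rwa [C.e_zero] at h

theorem e_lt_v {t : ℝ} (ht : t < 1) : eAff u v t < v := by
  have h := (C.e_lt_iff (a := t) (b := 1)).mpr ht
  rwa [C.e_one] at h

theorem e_le_v {t : ℝ} (ht : t ≤ 1) : eAff u v t ≤ v := by
  have h := (C.e_le_iff (a := t) (b := 1)).mpr ht
  rwa [C.e_one] at h

theorem e_nonneg {t : ℝ} (ht : 0 ≤ t) : 0 ≤ eAff u v t := le_trans C.hu0 (C.u_le_e ht)
theorem e_le_one {t : ℝ} (ht : t ≤ 1) : eAff u v t ≤ 1 := le_trans (C.e_le_v ht) C.hv1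
theorem e_mem {t : ℝ} (ht : t ∈ Ico (0:ℝ) 1) : eAff u v t ∈ Ico u v :=
  ⟨C.u_le_e ht.1, C.e_lt_v ht.2⟩
theorem e_ne_zero {t : ℝ} (ht : 0 < t) : eAff u v t ≠ 0 :=
  ne_of_gt (lt_of_le_of_lt C.hu0 (C.u_lt_e ht))

theorem h_eq {t : ℝ} (ht : t ∈ Ico (0:ℝ) 1) : h t = f (eAff u v t) - lm f u := by
  rw [C.hh, if_pos ht]; rfl

theorem h_eq' {t : ℝ} (ht : t ∉ Ico (0:ℝ) 1) : h t = 0 := by rw [C.hh, if_neg ht]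

theorem e_cont : Continuous (eAff u v) := by
  unfold eAff; fun_prop

theorem tendsto_e_lt {t : ℝ} : Tendsto (eAff u v) (𝓝[<] t) (𝓝[<] (eAff u v t)) := by
  rw [tendsto_nhdsWithin_iff]
  constructor
  · exact (C.e_cont.tendsto t).mono_left nhdsWithin_le_nhds
  · filter_upwards [self_mem_nhdsWithin] with x hx
    exact C.e_lt_iff.mpr (mem_Iio.1 hx)

theorem tendsto_e_gt {t : ℝ} : Tendsto (eAff u v) (𝓝[>] t) (𝓝[>] (eAff u v t)) := by
  rw [tendsto_nhdsWithin_iff]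
  constructor
  · exact (C.e_cont.tendsto t).mono_left nhdsWithin_le_nhds
  · filter_upwards [self_mem_nhdsWithin] with x hx
    exact C.e_lt_iff.mpr (mem_Ioi.1 hx)

theorem tendsto_h_lt {t : ℝ} (ht0 : 0 < t) (ht1 : t ≤ 1) :
    Tendsto h (𝓝[<] t) (𝓝 (lm f (eAff u v t) - lm f u)) := by
  have hev : ∀ᶠ x in 𝓝[<] t, h x = f (eAff u v x) - lm f u := by
    filter_upwards [Ioo_mem_nhdsLT_of_mem (show t ∈ Ioc (0:ℝ) t from ⟨ht0, le_rfl⟩)] with x hx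
    exact C.h_eq ⟨le_of_lt hx.1, lt_of_lt_of_le hx.2 ht1⟩
  have h1 : Tendsto (fun x => f (eAff u v x) - lm f u) (𝓝[<] t)
      (𝓝 (lm f (eAff u v t) - lm f u)) := by
    apply Tendsto.sub_const
    exact (tendsto_lm C.hf (C.e_ne_zero ht0)).comp C.tendsto_e_lt
  exact h1.congr' (hev.mono fun x hx => hx.symm)

theorem lm_h {t : ℝ} (ht0 : 0 ≤ t) (ht1 : t ≤ 1) : lm h t = lm f (eAff u v t) - lm f u := by
  rcases eq_or_lt_of_le ht0 with h0 | h0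
  · rw [← h0, lm_zero, C.e_zero, sub_self]
  · rw [lm, if_neg (ne_of_gt h0)]
    exact leftLim_eq_of_tendsto (C.tendsto_h_lt h0 ht1)

theorem jump_h {t : ℝ} (ht0 : 0 ≤ t) (ht1 : t < 1) : jump h t = jump f (eAff u v t) := by
  rw [jump, jump, C.h_eq ⟨ht0, ht1⟩, C.lm_h ht0 (le_of_lt ht1)]
  ring

theorem hexc_h : IsExcursion h := by
  have hc := C.c_nonneg
  constructor
  · intro t ht
    by_cases htm : t ∈ Ico (0:ℝ) 1
    · rw [C.h_eq htm]
      have := C.K1 (eAff u v t) ⟨C.u_le_e htm.1, C.e_le_v (le_of_lt htm.2)⟩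
      linarith
    · rw [C.h_eq' htm]
  · intro t ht
    apply C.h_eq'
    intro hc'
    simp only [mem_Icc] at ht; push_neg at ht
    linarith [ht hc'.1, hc'.2]
  · intro t ht
    have hev : ∀ᶠ x in 𝓝[>] t, h x = f (eAff u v x) - lm f u := by
      filter_upwards [Ioo_mem_nhdsGT_of_mem (show t ∈ Ico t 1 from ⟨le_rfl, ht.2⟩)] with x hx
      exact C.h_eq ⟨le_trans ht.1 (le_of_lt hx.1), hx.2⟩
    rw [C.h_eq ht]
    apply Tendsto.congr' (hev.mono fun x hx => hx.symm)
    apply Tendsto.sub_const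
    exact (C.hf.rightCont (eAff u v t) ⟨C.e_nonneg ht.1, lt_of_lt_of_le (C.e_lt_v ht.2) C.hv1⟩).comp C.tendsto_e_gt
  · intro t ht
    have h3 : Function.leftLim h t = lm f (eAff u v t) - lm f u := by
      have := C.lm_h (le_of_lt ht.1) ht.2
      rwa [lm, if_neg (ne_of_gt ht.1)] at this
    rw [h3]
    exact C.tendsto_h_lt ht.1 ht.2
  · exact C.h_eq' (by simp)
  · intro t ht
    rcases lt_or_ge t 1 with h1 | h1
    · rw [C.jump_h ht.1 h1]
      exact C.hf.jump_nonneg (eAff u v t) ⟨C.e_nonneg ht.1, C.e_le_one (le_of_lt h1)⟩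
    · have ht1 : t = 1 := le_antisymm ht.2 h1
      have : lm h t = 0 := by
        rw [C.lm_h ht.1 ht.2, ht1, C.e_one, ← C.hlm, sub_self]
      rw [jump, this, C.h_eq' (by rw [ht1]; simp), sub_zero]

theorem infIcc_h {x y : ℝ} (hx : 0 ≤ x) (hxy : x ≤ y) (hy : y < 1) :
    infIcc h x y = infIcc f (eAff u v x) (eAff u v y) - lm f u := by
  have hE : eAff u v x ≤ eAff u v y := C.e_le_iff.mpr hxy
  apply le_antisymm
  · rw [le_sub_iff_add_le]
    apply le_infIcc hE
    intro w hw
    have hez : eAff u v ((w - u) / (v - u)) = w := C.e_inv w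
    have hzx : x ≤ (w - u) / (v - u) := by
      apply C.e_le_iff.mp; rw [hez]; exact hw.1
    have hzy : (w - u) / (v - u) ≤ y := by
      apply C.e_le_iff.mp; rw [hez]; exact hw.2
    have hzm : (w - u) / (v - u) ∈ Ico (0:ℝ) 1 := ⟨le_trans hx hzx, lt_of_le_of_lt hzy hy⟩
    have h1 : infIcc h x y ≤ h ((w - u) / (v - u)) := infIcc_le C.hexc_h ⟨hzx, hzy⟩
    rw [C.h_eq hzm, hez] at h1
    linarith
  · apply le_infIcc hxy
    intro z hz
    have hzm : z ∈ Ico (0:ℝ) 1 := ⟨le_trans hx hz.1, lt_of_le_of_lt hz.2 hy⟩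
    rw [C.h_eq hzm]
    have : infIcc f (eAff u v x) (eAff u v y) ≤ f (eAff u v z) :=
      infIcc_le C.hf ⟨C.e_le_iff.mpr hz.1, C.e_le_iff.mpr hz.2⟩
    linarith

theorem pre_h {x y : ℝ} (hx : 0 ≤ x) (hy : y < 1) :
    pre h x y ↔ pre f (eAff u v x) (eAff u v y) := by
  unfold pre
  by_cases hxy : x ≤ y
  · rw [C.lm_h hx (le_of_lt (lt_of_le_of_lt hxy hy)), C.infIcc_h hx hxy hy]
    constructor
    · rintro ⟨-, h2⟩; exact ⟨C.e_le_iff.mpr hxy, by linarith⟩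
    · rintro ⟨-, h2⟩; exact ⟨hxy, by linarith⟩
  · constructor
    · rintro ⟨h1, -⟩; exact absurd h1 hxy
    · rintro ⟨h1, -⟩; exact absurd (C.e_le_iff.mp h1) hxy

theorem xst_h {x y : ℝ} (hx : 0 ≤ x) (hy : y < 1) :
    xst h x y = xst f (eAff u v x) (eAff u v y) := by
  unfold xst
  by_cases hxy : x ≤ y
  · rw [if_pos hxy, if_pos (C.e_le_iff.mpr hxy),
      C.lm_h hx (le_of_lt (lt_of_le_of_lt hxy hy)), C.infIcc_h hx hxy hy]
    congr 1
    ring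
  · rw [if_neg hxy, if_neg (fun hc => hxy (C.e_le_iff.mp hc))]

theorem infIcc_h_one {r : ℝ} (hr : r ≤ 1) : infIcc h r 1 = 0 := by
  apply le_antisymm
  · have : infIcc h r 1 ≤ h 1 := infIcc_le C.hexc_h ⟨hr, le_rfl⟩
    rwa [C.h_eq' (by simp)] at this
  · exact infIcc_nonneg C.hexc_h r 1

theorem pre_h_one {r : ℝ} (hr : r ≤ 1) : pre h r 1 ↔ lm h r = 0 := by
  unfold pre
  rw [C.infIcc_h_one hr]
  constructor
  · rintro ⟨-, h2⟩; exact le_antisymm h2 (lm_nonneg C.hexc_h r)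
  · intro h1; exact ⟨hr, le_of_eq h1⟩

end Ctx
namespace Ctx

open Aux

variable {f g h : ℝ → ℝ} {u v : ℝ} (C : Ctx f g h u v)
include C

theorem lm_g_out' {r : ℝ} (hr : r ∉ Ioo u v) : lm g r = lm f r := by
  by_cases hrv : r = v
  · rw [hrv]; exact C.lm_g_v
  · exact C.lm_g_out (fun hc => hr ⟨hc.1, lt_of_le_of_ne hc.2 hrv⟩)

theorem jump_g_out' {r : ℝ} (hr : r ∉ Ioo u v) (hru : r ≠ u) : jump g r = jump f r := by
  apply C.jump_g_out
  intro hc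
  exact hr ⟨lt_of_le_of_ne hc.1 (Ne.symm hru), hc.2⟩

theorem pre_g' {r w : ℝ} (hr : r ∉ Ioo u v) (hw : w ∉ Ico u v) : pre g r w ↔ pre f r w := by
  unfold pre
  by_cases hrw : r ≤ w
  · rw [C.lm_g_out' hr, C.infIcc_g hrw hw]
  · simp [hrw]

theorem xst_g' {r w : ℝ} (hr : r ∉ Ioo u v) (hw : w ∉ Ico u v) : xst g r w = xst f r w := by
  unfold xst
  by_cases hrw : r ≤ w
  · rw [if_pos hrw, if_pos hrw, C.lm_g_out' hr, C.infIcc_g hrw hw]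
  · rw [if_neg hrw, if_neg hrw]

theorem out_ge {w : ℝ} (hw : w ∉ Ico u v) (h1 : u ≤ w) : v ≤ w := by
  by_contra hc
  exact hw ⟨h1, not_le.1 hc⟩

/-- `x_r^w(f) = 0` for `r ∈ (u,v)` when `v ≤ w`. -/
theorem xst_f_mid_zero {r w : ℝ} (hr : r ∈ Ioo u v) (hw : v ≤ w) : xst f r w = 0 := by
  unfold xst
  split
  · apply max_eq_right
    have h1 : infIcc f r w ≤ lm f u := C.inf_le_c_v hr.2 hw
    have h2 : lm f u ≤ lm f r := C.c_le_lm hr.1 (le_of_lt hr.2)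
    linarith
  · rfl

/-- `x_u^w(f) = 0` when `v ≤ w`. -/
theorem xst_f_u_zero {w : ℝ} (hw : v ≤ w) : xst f u w = 0 := by
  unfold xst
  rw [if_pos (le_trans (le_of_lt C.hlt) hw)]
  apply max_eq_right
  have h1 : infIcc f u w ≤ lm f u := C.inf_le_c_v C.hlt hw
  linarith

/-- `x_r^w(g) = 0` for `r ∈ [u,v)` when `v ≤ w`. -/
theorem xst_g_mid_zero {r w : ℝ} (hr : r ∈ Ico u v) (hw : v ≤ w) : xst g r w = 0 := by
  unfold xst
  rw [if_pos (le_trans (le_of_lt hr.2) hw)]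
  apply max_eq_right
  have h1 : infIcc g r w ≤ g r := infIcc_le C.hexc_g ⟨le_rfl, le_trans (le_of_lt hr.2) hw⟩
  rw [C.g_eqc hr] at h1
  have h2 : lm g r = lm f u := by
    rcases eq_or_lt_of_le hr.1 with h3 | h3
    · rw [← h3, C.lm_g_out' (fun hc => lt_irrefl u hc.1)]
    · exact C.lm_g_in ⟨h3, le_of_lt hr.2⟩
  rw [h2]; linarith

theorem xst_g_uu : xst g u u = 0 := by
  unfold xst
  rw [if_pos le_rfl, infIcc_self C.hexc_g, C.g_eqc ⟨le_rfl, C.hlt⟩,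
    C.lm_g_out' (fun hc => lt_irrefl u hc.1)]
  simp


theorem mrca_f_notmid {a b : ℝ} (ha : a ∈ Icc (0:ℝ) 1) (hb : b ∈ Icc (0:ℝ) 1)
    (ha' : a ∉ Ico u v) (hb' : b ∉ Ico u v) : mrca f a b ∉ Ioo u v := by
  intro hm
  have hspec := mrca_spec C.hf ha hb
  have hma : mrca f a b ≤ a := hspec.1.1
  have hmb : mrca f a b ≤ b := hspec.2.1
  have hav : v ≤ a := C.out_ge ha' (le_trans (le_of_lt hm.1) hma)
  have hbv : v ≤ b := C.out_ge hb' (le_trans (le_of_lt hm.1) hmb)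
  have hkey : ∀ w, v ≤ w → pre f (mrca f a b) w → pre f v w := by
    intro w hvw hpre
    refine ⟨hvw, ?_⟩
    rw [← C.hlm]
    have h1 : lm f u ≤ lm f (mrca f a b) := C.c_le_lm hm.1 (le_of_lt hm.2)
    have h2 := hpre.2
    have h3 : infIcc f (mrca f a b) w = min (infIcc f (mrca f a b) v) (infIcc f v w) :=
      infIcc_split C.hf (le_of_lt hm.2) hvw
    have h4 : infIcc f (mrca f a b) w ≤ infIcc f v w := by
      rw [h3]; exact min_le_right _ _
    linarith
  have hvS : v ∈ {r : ℝ | 0 ≤ r ∧ pre f r a ∧ pre f r b} :=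
    ⟨le_of_lt C.hv0, hkey a hav hspec.1, hkey b hbv hspec.2⟩
  have hle : v ≤ mrca f a b := le_csSup (bddAbove_anc a b) hvS
  exact absurd (lt_of_lt_of_le hm.2 hle) (lt_irrefl _)

theorem mrca_g_notmid {a b : ℝ} (ha : a ∈ Icc (0:ℝ) 1) (hb : b ∈ Icc (0:ℝ) 1)
    (ha' : a ∉ Ico u v) (hb' : b ∉ Ico u v) : mrca g a b ∉ Ioo u v := by
  intro hm
  have hspec := mrca_spec C.hexc_g ha hb
  have hma : mrca g a b ≤ a := hspec.1.1
  have hmb : mrca g a b ≤ b := hspec.2.1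
  have hav : v ≤ a := C.out_ge ha' (le_trans (le_of_lt hm.1) hma)
  have hbv : v ≤ b := C.out_ge hb' (le_trans (le_of_lt hm.1) hmb)
  have hkey : ∀ w, v ≤ w → pre g (mrca g a b) w → pre g v w := by
    intro w hvw hpre
    refine ⟨hvw, ?_⟩
    have hlmv : lm g v = lm f u := by rw [C.lm_g_v, ← C.hlm]
    rw [hlmv]
    apply le_infIcc hvw
    intro x hx
    have h1 : infIcc g (mrca g a b) w ≤ g x :=
      infIcc_le C.hexc_g ⟨le_trans (le_of_lt (lt_of_lt_of_le hm.2 hx.1)) le_rfl, hx.2⟩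
    have h2 : lm g (mrca g a b) = lm f u := C.lm_g_in ⟨hm.1, le_of_lt hm.2⟩
    have h3 := hpre.2
    linarith
  have hvS : v ∈ {r : ℝ | 0 ≤ r ∧ pre g r a ∧ pre g r b} :=
    ⟨le_of_lt C.hv0, hkey a hav hspec.1, hkey b hbv hspec.2⟩
  have hle : v ≤ mrca g a b := le_csSup (bddAbove_anc a b) hvS
  exact absurd (lt_of_lt_of_le hm.2 hle) (lt_irrefl _)

theorem mrca_gf {a b : ℝ} (ha : a ∈ Icc (0:ℝ) 1) (hb : b ∈ Icc (0:ℝ) 1)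
    (ha' : a ∉ Ico u v) (hb' : b ∉ Ico u v) : mrca g a b = mrca f a b := by
  have h1 := C.mrca_f_notmid ha hb ha' hb'
  have h2 := C.mrca_g_notmid ha hb ha' hb'
  have hfS := mrca_spec C.hf ha hb
  have hgS := mrca_spec C.hexc_g ha hb
  apply le_antisymm
  · exact le_csSup (bddAbove_anc a b)
      ⟨mrca_nonneg C.hexc_g ha.1 hb.1, (C.pre_g' h2 ha').mp hgS.1, (C.pre_g' h2 hb').mp hgS.2⟩
  · exact le_csSup (bddAbove_anc a b)
      ⟨mrca_nonneg C.hf ha.1 hb.1, (C.pre_g' h1 ha').mpr hfS.1, (C.pre_g' h1 hb').mpr hfS.2⟩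

theorem dOterm_gf {m w : ℝ} (hm0 : 0 ≤ m) (hm : m ∉ Ioo u v) (hw1 : w ≤ 1)
    (hw : w ∉ Ico u v) (r : ℝ) :
    (if pre g m r ∧ m < r ∧ pre g r w then cdel g r 0 (xst g r w) else 0)
      = (if pre f m r ∧ m < r ∧ pre f r w then cdel f r 0 (xst f r w) else 0) := by
  rcases lt_trichotomy r u with hru | hru | hru
  · have hr1 : r ∉ Ioo u v := fun hc => absurd hc.1 (not_lt.2 (le_of_lt hru))
    have hr2 : r ∉ Ico u v := fun hc => absurd hc.1 (not_le.2 hru)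
    rw [C.pre_g' hm hr2, C.pre_g' hr1 hw, C.xst_g' hr1 hw]
    by_cases hcond : pre f m r ∧ m < r ∧ pre f r w
    · rw [if_pos hcond, if_pos hcond, cdel, cdel, C.jump_g_out hr2]
    · rw [if_neg hcond, if_neg hcond]
  · rw [hru]
    have hIco : u ∈ Ico u v := ⟨le_rfl, C.hlt⟩
    trans (0:ℝ)
    · split
      · rename_i hcond
        have hvw : v ≤ w := C.out_ge hw hcond.2.2.1
        rw [C.xst_g_mid_zero hIco hvw]
        apply cdel_zero_zero
        rw [C.jump_g_in hIco]
      · rfl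
    · split
      · rename_i hcond
        have hvw : v ≤ w := C.out_ge hw hcond.2.2.1
        rw [C.xst_f_u_zero hvw, cdel_zero_zero (C.hf.jump_nonneg u ⟨C.hu0, C.hu.2⟩)]
      · rfl
  · by_cases hrv : r < v
    · have hIoo : r ∈ Ioo u v := ⟨hru, hrv⟩
      have hIco : r ∈ Ico u v := ⟨le_of_lt hru, hrv⟩
      trans (0:ℝ)
      · split
        · rename_i hcond
          have hvw : v ≤ w := C.out_ge hw (le_trans (le_of_lt hru) hcond.2.2.1)
          rw [C.xst_g_mid_zero hIco hvw]
          apply cdel_zero_zero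
          rw [C.jump_g_in hIco]
        · rfl
      · split
        · rename_i hcond
          have hvw : v ≤ w := C.out_ge hw (le_trans (le_of_lt hru) hcond.2.2.1)
          rw [C.xst_f_mid_zero hIoo hvw,
            cdel_zero_zero (C.hf.jump_nonneg r
              ⟨le_trans C.hu0 (le_of_lt hru), le_trans (le_of_lt hrv) C.hv1⟩)]
        · rfl
    · push_neg at hrv
      have hr1 : r ∉ Ioo u v := fun hc => absurd hc.2 (not_lt.2 hrv)
      have hr2 : r ∉ Ico u v := fun hc => absurd hc.2 (not_lt.2 hrv)
      rw [C.pre_g' hm hr2, C.pre_g' hr1 hw, C.xst_g' hr1 hw]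
      by_cases hcond : pre f m r ∧ m < r ∧ pre f r w
      · rw [if_pos hcond, if_pos hcond, cdel, cdel,
          C.jump_g_out' hr1 (ne_of_gt hru)]
      · rw [if_neg hcond, if_neg hcond]

theorem xterm_gf {m w : ℝ} (hm0 : 0 ≤ m) (hm : m ∉ Ioo u v) (hw1 : w ≤ 1)
    (hw : w ∉ Ico u v) (r : ℝ) :
    (if pre g m r ∧ m < r ∧ pre g r w then xst g r w else 0)
      = (if pre f m r ∧ m < r ∧ pre f r w then xst f r w else 0) := by
  rcases lt_trichotomy r u with hru | hru | hru
  · have hr1 : r ∉ Ioo u v := fun hc => absurd hc.1 (not_lt.2 (le_of_lt hru))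
    have hr2 : r ∉ Ico u v := fun hc => absurd hc.1 (not_le.2 hru)
    rw [C.pre_g' hm hr2, C.pre_g' hr1 hw, C.xst_g' hr1 hw]
  · rw [hru]
    have hIco : u ∈ Ico u v := ⟨le_rfl, C.hlt⟩
    trans (0:ℝ)
    · split
      · rename_i hcond
        exact C.xst_g_mid_zero hIco (C.out_ge hw hcond.2.2.1)
      · rfl
    · split
      · rename_i hcond
        exact (C.xst_f_u_zero (C.out_ge hw hcond.2.2.1)).symm
      · rfl
  · by_cases hrv : r < v
    · have hIoo : r ∈ Ioo u v := ⟨hru, hrv⟩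
      have hIco : r ∈ Ico u v := ⟨le_of_lt hru, hrv⟩
      trans (0:ℝ)
      · split
        · rename_i hcond
          exact C.xst_g_mid_zero hIco (C.out_ge hw (le_trans (le_of_lt hru) hcond.2.2.1))
        · rfl
      · split
        · rename_i hcond
          exact (C.xst_f_mid_zero hIoo (C.out_ge hw (le_trans (le_of_lt hru) hcond.2.2.1))).symm
        · rfl
    · push_neg at hrv
      have hr1 : r ∉ Ioo u v := fun hc => absurd hc.2 (not_lt.2 hrv)
      have hr2 : r ∉ Ico u v := fun hc => absurd hc.2 (not_lt.2 hrv)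
      rw [C.pre_g' hm hr2, C.pre_g' hr1 hw, C.xst_g' hr1 hw]

theorem dO_gf {m w : ℝ} (hm0 : 0 ≤ m) (hm : m ∉ Ioo u v) (hw1 : w ≤ 1)
    (hw : w ∉ Ico u v) : dO g m w = dO f m w :=
  tsum_congr (C.dOterm_gf hm0 hm hw1 hw)

theorem dTanc_gf {m w : ℝ} (hm0 : 0 ≤ m) (hm : m ∉ Ioo u v) (hmw : m ≤ w) (hw1 : w ≤ 1)
    (hw : w ∉ Ico u v) : dTanc g m w = dTanc f m w := by
  unfold dTanc
  rw [C.g_eq hw, C.infIcc_g hmw hw, tsum_congr (C.xterm_gf hm0 hm hw1 hw)]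

theorem head_gf {m a b : ℝ} (hm0 : 0 ≤ m) (hm : m ∉ Ioo u v) (hma : m ≤ a) (hmb : m ≤ b)
    (ha' : a ∉ Ico u v) (hb' : b ∉ Ico u v) :
    cdel g m (xst g m a) (xst g m b) = cdel f m (xst f m a) (xst f m b) := by
  by_cases hmu : m = u
  · have hIco : u ∈ Ico u v := ⟨le_rfl, C.hlt⟩
    have hav : v ≤ a := C.out_ge ha' (le_trans (le_of_eq hmu.symm) hma)
    have hbv : v ≤ b := C.out_ge hb' (le_trans (le_of_eq hmu.symm) hmb)
    rw [hmu, C.xst_g_mid_zero hIco hav, C.xst_g_mid_zero hIco hbv,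
      C.xst_f_u_zero hav, C.xst_f_u_zero hbv,
      cdel_zero_zero (C.hf.jump_nonneg u ⟨C.hu0, C.hu.2⟩),
      cdel_zero_zero (le_of_eq (C.jump_g_in hIco).symm)]
  · rw [C.xst_g' hm ha', C.xst_g' hm hb', cdel, cdel, C.jump_g_out' hm hmu]

/-- Part 1 of the theorem. -/
theorem part1 {a b : ℝ} (ha : a ∈ Icc (0:ℝ) 1 \ Ico u v) (hb : b ∈ Icc (0:ℝ) 1 \ Ico u v) :
    dL f a b = dL g a b ∧ dT f a b = dT g a b := by
  obtain ⟨ha1, ha2⟩ := ha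
  obtain ⟨hb1, hb2⟩ := hb
  have hmr := C.mrca_gf ha1 hb1 ha2 hb2
  have hnm := C.mrca_f_notmid ha1 hb1 ha2 hb2
  have hspec := mrca_spec C.hf ha1 hb1
  have hm0 : 0 ≤ mrca f a b := mrca_nonneg C.hf ha1.1 hb1.1
  constructor
  · rw [dL, dL, hmr, C.head_gf hm0 hnm hspec.1.1 hspec.2.1 ha2 hb2,
      C.dO_gf hm0 hnm ha1.2 ha2, C.dO_gf hm0 hnm hb1.2 hb2]
  · rw [dT, dT, hmr, C.dTanc_gf hm0 hnm hspec.1.1 ha1.2 ha2,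
      C.dTanc_gf hm0 hnm hspec.2.1 hb1.2 hb2]

end Ctx
def eEquiv (u v : ℝ) (hne : v - u ≠ 0) : ℝ ≃ ℝ where
  toFun := eAff u v
  invFun y := (y - u) / (v - u)
  left_inv t := by unfold eAff; field_simp; ring
  right_inv y := by unfold eAff; field_simp; ring

namespace Ctx

open Aux

variable {f g h : ℝ → ℝ} {u v : ℝ} (C : Ctx f g h u v)
include C

theorem tsum_e (F : ℝ → ℝ) : ∑' ρ, F ρ = ∑' r, F (eAff u v r) :=
  ((eEquiv u v (ne_of_gt C.hw)).tsum_eq F).symm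

theorem pre_u_e {s : ℝ} (hs0 : 0 ≤ s) (hs1 : s ≤ 1) : pre f u (eAff u v s) :=
  ⟨C.u_le_e hs0, le_infIcc (C.u_le_e hs0)
    (fun x hx => C.K1 x ⟨hx.1, le_trans hx.2 (C.e_le_v hs1)⟩)⟩

theorem mrca_fh {s t : ℝ} (hs : s ∈ Ico (0:ℝ) 1) (ht : t ∈ Ico (0:ℝ) 1) :
    mrca f (eAff u v s) (eAff u v t) = eAff u v (mrca h s t) := by
  have hsI : s ∈ Icc (0:ℝ) 1 := ⟨hs.1, le_of_lt hs.2⟩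
  have htI : t ∈ Icc (0:ℝ) 1 := ⟨ht.1, le_of_lt ht.2⟩
  have hesI : eAff u v s ∈ Icc (0:ℝ) 1 := ⟨C.e_nonneg hs.1, C.e_le_one hsI.2⟩
  have hetI : eAff u v t ∈ Icc (0:ℝ) 1 := ⟨C.e_nonneg ht.1, C.e_le_one htI.2⟩
  have hspech := mrca_spec C.hexc_h hsI htI
  have hm0 : 0 ≤ mrca h s t := mrca_nonneg C.hexc_h hsI.1 htI.1
  have hspecf := mrca_spec C.hf hesI hetI
  apply le_antisymm
  · -- m_f ≤ e m_h
    have hmfu : u ≤ mrca f (eAff u v s) (eAff u v t) :=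
      le_csSup (bddAbove_anc _ _) ⟨C.hu0, C.pre_u_e hsI.1 hsI.2, C.pre_u_e htI.1 htI.2⟩
    set mf := mrca f (eAff u v s) (eAff u v t) with hmf
    have hez : eAff u v ((mf - u) / (v - u)) = mf := C.e_inv mf
    have hz0 : 0 ≤ (mf - u) / (v - u) := by
      apply C.e_le_iff.mp
      rw [hez, C.e_zero]; exact hmfu
    have hzs : (mf - u) / (v - u) ≤ s := by
      apply C.e_le_iff.mp
      rw [hez]; exact hspecf.1.1
    have hzt : (mf - u) / (v - u) ≤ t := by
      apply C.e_le_iff.mp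
      rw [hez]; exact hspecf.2.1
    have hzS : (mf - u) / (v - u) ∈ {r : ℝ | 0 ≤ r ∧ pre h r s ∧ pre h r t} := by
      refine ⟨hz0, ?_, ?_⟩
      · rw [C.pre_h hz0 hs.2, hez]; exact hspecf.1
      · rw [C.pre_h hz0 ht.2, hez]; exact hspecf.2
    have := le_csSup (bddAbove_anc s t) hzS
    calc mf = eAff u v ((mf - u) / (v - u)) := hez.symm
      _ ≤ eAff u v (mrca h s t) := C.e_le_iff.mpr this
  · apply le_csSup (bddAbove_anc _ _)
    refine ⟨C.e_nonneg hm0, ?_, ?_⟩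
    · rw [← C.pre_h hm0 hs.2]; exact hspech.1
    · rw [← C.pre_h hm0 ht.2]; exact hspech.2

theorem dO_fh {σ τ : ℝ} (hσ0 : 0 ≤ σ) (hτ : τ < 1) :
    dO f (eAff u v σ) (eAff u v τ) = dO h σ τ := by
  have key := (eEquiv u v (ne_of_gt C.hw)).tsum_eq
    (fun ρ => if pre f (eAff u v σ) ρ ∧ eAff u v σ < ρ ∧ pre f ρ (eAff u v τ)
      then cdel f ρ 0 (xst f ρ (eAff u v τ)) else 0)
  rw [dO, dO, ← key]
  apply tsum_congr
  intro r
  show (if pre f (eAff u v σ) (eAff u v r) ∧ eAff u v σ < eAff u v r ∧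
      pre f (eAff u v r) (eAff u v τ) then cdel f (eAff u v r) 0 (xst f (eAff u v r) (eAff u v τ))
      else 0) = _
  by_cases hr1 : σ < r ∧ r ≤ τ
  · have hr0 : 0 ≤ r := le_trans hσ0 (le_of_lt hr1.1)
    have hrlt : r < 1 := lt_of_le_of_lt hr1.2 hτ
    have hiff : (pre f (eAff u v σ) (eAff u v r) ∧ eAff u v σ < eAff u v r ∧
        pre f (eAff u v r) (eAff u v τ)) ↔ (pre h σ r ∧ σ < r ∧ pre h r τ) := by
      rw [← C.pre_h hσ0 hrlt, ← C.pre_h hr0 hτ, C.e_lt_iff]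
    by_cases hcond : pre h σ r ∧ σ < r ∧ pre h r τ
    · rw [if_pos (hiff.mpr hcond), if_pos hcond, cdel, cdel,
        ← C.jump_h hr0 hrlt, ← C.xst_h hr0 hτ]
    · rw [if_neg (fun hc => hcond (hiff.mp hc)), if_neg hcond]
  · rcases not_and_or.mp hr1 with h2 | h2
    · push_neg at h2
      rw [if_neg (fun hc => absurd (C.e_lt_iff.mp hc.2.1) (not_lt.2 h2)),
        if_neg (fun hc : pre h σ r ∧ σ < r ∧ pre h r τ => absurd hc.2.1 (not_lt.2 h2))]
    · push_neg at h2
      rw [if_neg (fun hc => absurd (C.e_le_iff.mp hc.2.2.1) (not_le.2 h2)),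
        if_neg (fun hc : pre h σ r ∧ σ < r ∧ pre h r τ => absurd hc.2.2.1 (not_le.2 h2))]

theorem xsum_fh {σ τ : ℝ} (hσ0 : 0 ≤ σ) (hτ : τ < 1) :
    (∑' ρ, if pre f (eAff u v σ) ρ ∧ eAff u v σ < ρ ∧ pre f ρ (eAff u v τ)
      then xst f ρ (eAff u v τ) else 0)
    = ∑' ρ, if pre h σ ρ ∧ σ < ρ ∧ pre h ρ τ then xst h ρ τ else 0 := by
  have key := (eEquiv u v (ne_of_gt C.hw)).tsum_eq
    (fun ρ => if pre f (eAff u v σ) ρ ∧ eAff u v σ < ρ ∧ pre f ρ (eAff u v τ)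
      then xst f ρ (eAff u v τ) else 0)
  rw [← key]
  apply tsum_congr
  intro r
  show (if pre f (eAff u v σ) (eAff u v r) ∧ eAff u v σ < eAff u v r ∧
      pre f (eAff u v r) (eAff u v τ) then xst f (eAff u v r) (eAff u v τ) else 0) = _
  by_cases hr1 : σ < r ∧ r ≤ τ
  · have hr0 : 0 ≤ r := le_trans hσ0 (le_of_lt hr1.1)
    have hrlt : r < 1 := lt_of_le_of_lt hr1.2 hτ
    have hiff : (pre f (eAff u v σ) (eAff u v r) ∧ eAff u v σ < eAff u v r ∧
        pre f (eAff u v r) (eAff u v τ)) ↔ (pre h σ r ∧ σ < r ∧ pre h r τ) := by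
      rw [← C.pre_h hσ0 hrlt, ← C.pre_h hr0 hτ, C.e_lt_iff]
    by_cases hcond : pre h σ r ∧ σ < r ∧ pre h r τ
    · rw [if_pos (hiff.mpr hcond), if_pos hcond, ← C.xst_h hr0 hτ]
    · rw [if_neg (fun hc => hcond (hiff.mp hc)), if_neg hcond]
  · rcases not_and_or.mp hr1 with h2 | h2
    · push_neg at h2
      rw [if_neg (fun hc => absurd (C.e_lt_iff.mp hc.2.1) (not_lt.2 h2)),
        if_neg (fun hc : pre h σ r ∧ σ < r ∧ pre h r τ => absurd hc.2.1 (not_lt.2 h2))]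
    · push_neg at h2
      rw [if_neg (fun hc => absurd (C.e_le_iff.mp hc.2.2.1) (not_le.2 h2)),
        if_neg (fun hc : pre h σ r ∧ σ < r ∧ pre h r τ => absurd hc.2.2.1 (not_le.2 h2))]

theorem dTanc_fh {σ τ : ℝ} (hσ0 : 0 ≤ σ) (hστ : σ ≤ τ) (hτ : τ < 1) :
    dTanc f (eAff u v σ) (eAff u v τ) = dTanc h σ τ := by
  unfold dTanc
  rw [C.xsum_fh hσ0 hτ, C.h_eq ⟨le_trans hσ0 hστ, hτ⟩, C.infIcc_h hσ0 hστ hτ]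
  ring

/-- Part 2 of the theorem. -/
theorem part2 {s t : ℝ} (hs : s ∈ Ico (0:ℝ) 1) (ht : t ∈ Ico (0:ℝ) 1) :
    dL f (u + s * (v - u)) (u + t * (v - u)) = dL h s t ∧
    dT f (u + s * (v - u)) (u + t * (v - u)) = dT h s t := by
  have hsI : s ∈ Icc (0:ℝ) 1 := ⟨hs.1, le_of_lt hs.2⟩
  have htI : t ∈ Icc (0:ℝ) 1 := ⟨ht.1, le_of_lt ht.2⟩
  have hm0 : 0 ≤ mrca h s t := mrca_nonneg C.hexc_h hsI.1 htI.1
  have hms : mrca h s t ≤ s := mrca_le_left C.hexc_h hsI.1 htI.1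
  have hmt : mrca h s t ≤ t := mrca_le_right C.hexc_h hsI.1 htI.1
  have hes : u + s * (v - u) = eAff u v s := rfl
  have het : u + t * (v - u) = eAff u v t := rfl
  rw [hes, het]
  constructor
  · rw [dL, dL, C.mrca_fh hs ht, C.dO_fh hm0 hs.2, C.dO_fh hm0 ht.2,
      C.xst_h hm0 hs.2, C.xst_h hm0 ht.2, cdel, cdel,
      C.jump_h hm0 (lt_of_le_of_lt hms hs.2)]
  · rw [dT, dT, C.mrca_fh hs ht, C.dTanc_fh hm0 hms hs.2, C.dTanc_fh hm0 hmt ht.2]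

end Ctx
namespace Ctx

open Aux

variable {f g h : ℝ → ℝ} {u v : ℝ} (C : Ctx f g h u v)
include C

theorem infIcc_left_absorb {r w : ℝ} (hr0 : 0 ≤ r) (hru : r < u) (huw : u ≤ w)
    (hwv : w ≤ v) : infIcc f r w = infIcc f r u := by
  apply le_antisymm
  · exact infIcc_mono C.hf le_rfl huw (le_of_lt hru)
  · apply le_infIcc (le_trans (le_of_lt hru) huw)
    intro x hx
    by_cases hxu : x ≤ u
    · exact infIcc_le C.hf ⟨hx.1, hxu⟩
    · push_neg at hxu
      calc infIcc f r u ≤ lm f u := C.inf_le_c_u hr0 hru le_rfl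
        _ ≤ f x := C.K1 x ⟨le_of_lt hxu, le_trans hx.2 hwv⟩

theorem infIcc_g_ru {r : ℝ} (hr0 : 0 ≤ r) (hru : r < u) : infIcc g r u = infIcc f r u := by
  apply le_antisymm
  · apply le_infIcc (le_of_lt hru)
    intro x hx
    by_cases hxu : x < u
    · rw [← C.g_eq_lt hxu]; exact infIcc_le C.hexc_g hx
    · push_neg at hxu
      have hxu' : x = u := le_antisymm hx.2 hxu
      calc infIcc g r u ≤ g u := infIcc_le C.hexc_g ⟨le_of_lt hru, le_rfl⟩
        _ = lm f u := C.g_eqc ⟨le_rfl, C.hlt⟩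
        _ ≤ f u := C.K1 u ⟨le_rfl, le_of_lt C.hlt⟩
        _ = f x := by rw [hxu']
  · apply le_infIcc (le_of_lt hru)
    intro x hx
    by_cases hxu : x < u
    · rw [C.g_eq_lt hxu]; exact infIcc_le C.hf hx
    · push_neg at hxu
      have hxu' : x = u := le_antisymm hx.2 hxu
      rw [hxu', C.g_eqc ⟨le_rfl, C.hlt⟩]
      exact C.inf_le_c_u hr0 hru le_rfl

/-- `x_r^p(f) = x_r^u(g)` for `0 ≤ r < u ≤ w ≤ v`. -/
theorem xst_f_eq_xst_g_u {r w : ℝ} (hr0 : 0 ≤ r) (hru : r < u) (huw : u ≤ w)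
    (hwv : w ≤ v) : xst f r w = xst g r u := by
  unfold xst
  rw [if_pos (le_trans (le_of_lt hru) huw), if_pos (le_of_lt hru),
    C.infIcc_left_absorb hr0 hru huw hwv, C.infIcc_g_ru hr0 hru,
    C.lm_g_out' (fun hc => absurd hc.1 (not_lt.2 (le_of_lt hru)))]

theorem pre_f_iff_pre_g_u {r w : ℝ} (hr0 : 0 ≤ r) (hru : r < u) (huw : u ≤ w)
    (hwv : w ≤ v) : pre f r w ↔ pre g r u := by
  unfold pre
  rw [C.infIcc_left_absorb hr0 hru huw hwv, C.infIcc_g_ru hr0 hru,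
    C.lm_g_out' (fun hc => absurd hc.1 (not_lt.2 (le_of_lt hru)))]
  constructor
  · rintro ⟨-, h2⟩; exact ⟨le_of_lt hru, h2⟩
  · rintro ⟨-, h2⟩; exact ⟨le_trans (le_of_lt hru) huw, h2⟩

theorem xst_g_from_u {w : ℝ} (huw : u ≤ w) : xst g u w = 0 := by
  unfold xst
  rw [if_pos huw]
  apply max_eq_right
  have h1 : infIcc g u w ≤ g u := infIcc_le C.hexc_g ⟨le_rfl, huw⟩
  rw [C.g_eqc ⟨le_rfl, C.hlt⟩, C.lm_g_out' (fun hc => lt_irrefl u hc.1)] at *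
  linarith

/-- `x_r^w(f) = 0` for `u ≤ r` below a point `ρ` where `f(ρ−) = f(u−)`. -/
theorem xst_zero_below_rho {r w ρ : ℝ} (hur : u ≤ r) (hrρ : r < ρ) (hρw : ρ ≤ w)
    (hρv : ρ ≤ v) (hlmρ : lm f ρ = lm f u) : xst f r w = 0 := by
  unfold xst
  rw [if_pos (le_trans (le_of_lt hrρ) hρw)]
  apply max_eq_right
  have h1 : infIcc f r w ≤ lm f ρ :=
    infIcc_le_lm C.hf hrρ hρw (ne_of_gt (lt_of_le_of_lt (le_trans C.hu0 hur) hrρ))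
  have h2 : lm f u ≤ lm f r := by
    rcases eq_or_lt_of_le hur with h3 | h3
    · rw [← h3]
    · exact C.c_le_lm h3 (le_trans (le_of_lt hrρ) hρv)
  rw [hlmρ] at h1
  linarith

/- facts about `mrca h s 1` -/

theorem mrca_h1_nonneg {s : ℝ} (hs : s ∈ Ico (0:ℝ) 1) : 0 ≤ mrca h s 1 :=
  mrca_nonneg C.hexc_h hs.1 zero_le_one

theorem mrca_h1_le {s : ℝ} (hs : s ∈ Ico (0:ℝ) 1) : mrca h s 1 ≤ s :=
  mrca_le_left C.hexc_h hs.1 zero_le_one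

theorem mrca_h1_spec {s : ℝ} (hs : s ∈ Ico (0:ℝ) 1) :
    pre h (mrca h s 1) s ∧ pre h (mrca h s 1) 1 :=
  mrca_spec C.hexc_h ⟨hs.1, le_of_lt hs.2⟩ ⟨zero_le_one, le_rfl⟩

theorem lm_h_mrca_h1 {s : ℝ} (hs : s ∈ Ico (0:ℝ) 1) : lm h (mrca h s 1) = 0 :=
  (C.pre_h_one (le_trans (C.mrca_h1_le hs) (le_of_lt hs.2))).mp (C.mrca_h1_spec hs).2

theorem lm_f_rho {s : ℝ} (hs : s ∈ Ico (0:ℝ) 1) :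
    lm f (eAff u v (mrca h s 1)) = lm f u := by
  have h1 := C.lm_h (C.mrca_h1_nonneg hs) (le_trans (C.mrca_h1_le hs) (le_of_lt hs.2))
  rw [C.lm_h_mrca_h1 hs] at h1
  linarith

theorem xst_h_one_zero {r : ℝ} (hr : r ≤ 1) (hlm : 0 ≤ lm h r) : xst h r 1 = 0 := by
  unfold xst
  rw [if_pos hr, C.infIcc_h_one hr]
  apply max_eq_right
  linarith

theorem dO_h_one {s : ℝ} (hs : s ∈ Ico (0:ℝ) 1) : dO h (mrca h s 1) 1 = 0 := by
  unfold dO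
  rw [tsum_congr (fun r => ?_), tsum_zero]
  split
  · rename_i hcond
    have hr0 : 0 ≤ r := le_trans (C.mrca_h1_nonneg hs) (le_of_lt hcond.2.1)
    have hr1 : r ≤ 1 := hcond.2.2.1
    rw [C.xst_h_one_zero hr1 (lm_nonneg C.hexc_h r)]
    exact cdel_zero_zero (C.hexc_h.jump_nonneg r ⟨hr0, hr1⟩)
  · rfl

theorem dTanc_h_one {s : ℝ} (hs : s ∈ Ico (0:ℝ) 1) : dTanc h (mrca h s 1) 1 = 0 := by
  unfold dTanc
  rw [tsum_congr (fun r => ?_), tsum_zero, C.infIcc_h_one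
    (le_trans (C.mrca_h1_le hs) (le_of_lt hs.2)), C.h_eq' (by simp)]
  · ring
  · split
    · rename_i hcond
      exact C.xst_h_one_zero hcond.2.2.1 (lm_nonneg C.hexc_h r)
    · rfl

theorem dL_h_one {s : ℝ} (hs : s ∈ Ico (0:ℝ) 1) :
    dL h s 1 = cdel h (mrca h s 1) (xst h (mrca h s 1) s) 0 + dO h (mrca h s 1) s := by
  rw [dL, C.dO_h_one hs, C.xst_h_one_zero (le_trans (C.mrca_h1_le hs) (le_of_lt hs.2))
    (le_of_eq (C.lm_h_mrca_h1 hs).symm), add_zero]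

theorem dT_h_one {s : ℝ} (hs : s ∈ Ico (0:ℝ) 1) : dT h s 1 = dTanc h (mrca h s 1) s := by
  rw [dT, C.dTanc_h_one hs, add_zero]

end Ctx
namespace Ctx

open Aux

variable {f g h : ℝ → ℝ} {u v : ℝ} (C : Ctx f g h u v)
include C

theorem pointA_c {s m : ℝ} (hs : s ∈ Ico (0:ℝ) 1) (hm0 : 0 ≤ m) (hmu : m < u)
    (r : ℝ) :
    Set.indicator (Iio u) (fun ρ => if pre f m ρ ∧ m < ρ ∧ pre f ρ (eAff u v s)
        then cdel f ρ 0 (xst f ρ (eAff u v s)) else 0) r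
      = (if pre g m r ∧ m < r ∧ pre g r u then cdel g r 0 (xst g r u) else 0) := by
  have hpu : u ≤ eAff u v s := C.u_le_e hs.1
  have hpv : eAff u v s < v := C.e_lt_v hs.2
  have hmIoo : m ∉ Ioo u v := fun hc => absurd hc.1 (not_lt.2 (le_of_lt hmu))
  by_cases hr : r < u
  · rw [Set.indicator_of_mem (mem_Iio.2 hr)]
    by_cases hr0 : 0 ≤ r
    · have hrIco : r ∉ Ico u v := fun hc => absurd hc.1 (not_le.2 hr)
      have h1 : pre g m r ↔ pre f m r := C.pre_g' hmIoo hrIco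
      have h2 : pre f r (eAff u v s) ↔ pre g r u :=
        C.pre_f_iff_pre_g_u hr0 hr hpu (le_of_lt hpv)
      by_cases hcond : pre f m r ∧ m < r ∧ pre f r (eAff u v s)
      · rw [if_pos hcond, if_pos ⟨h1.mpr hcond.1, hcond.2.1, h2.mp hcond.2.2⟩,
          C.xst_f_eq_xst_g_u hr0 hr hpu (le_of_lt hpv), cdel, cdel, C.jump_g_out hrIco]
      · rw [if_neg hcond, if_neg (fun hc => hcond ⟨h1.mp hc.1, hc.2.1, h2.mpr hc.2.2⟩)]
    · push_neg at hr0
      rw [if_neg (fun hc => absurd hc.1.1 (not_le.2 (lt_of_lt_of_le hr0 hm0))),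
        if_neg (fun hc => absurd hc.1.1 (not_le.2 (lt_of_lt_of_le hr0 hm0)))]
  · push_neg at hr
    rw [Set.indicator_of_notMem (by simpa using hr)]
    rcases eq_or_lt_of_le hr with hru | hru
    · rw [← hru]
      symm
      split
      · rw [C.xst_g_uu, cdel_zero_zero (le_of_eq (C.jump_g_in ⟨le_rfl, C.hlt⟩).symm)]
      · rfl
    · rw [if_neg (fun hc => absurd hc.2.2.1 (not_le.2 hru))]

theorem pointA_x {s m : ℝ} (hs : s ∈ Ico (0:ℝ) 1) (hm0 : 0 ≤ m) (hmu : m < u)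
    (r : ℝ) :
    Set.indicator (Iio u) (fun ρ => if pre f m ρ ∧ m < ρ ∧ pre f ρ (eAff u v s)
        then xst f ρ (eAff u v s) else 0) r
      = (if pre g m r ∧ m < r ∧ pre g r u then xst g r u else 0) := by
  have hpu : u ≤ eAff u v s := C.u_le_e hs.1
  have hpv : eAff u v s < v := C.e_lt_v hs.2
  have hmIoo : m ∉ Ioo u v := fun hc => absurd hc.1 (not_lt.2 (le_of_lt hmu))
  by_cases hr : r < u
  · rw [Set.indicator_of_mem (mem_Iio.2 hr)]
    by_cases hr0 : 0 ≤ r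
    · have hrIco : r ∉ Ico u v := fun hc => absurd hc.1 (not_le.2 hr)
      have h1 : pre g m r ↔ pre f m r := C.pre_g' hmIoo hrIco
      have h2 : pre f r (eAff u v s) ↔ pre g r u :=
        C.pre_f_iff_pre_g_u hr0 hr hpu (le_of_lt hpv)
      by_cases hcond : pre f m r ∧ m < r ∧ pre f r (eAff u v s)
      · rw [if_pos hcond, if_pos ⟨h1.mpr hcond.1, hcond.2.1, h2.mp hcond.2.2⟩,
          C.xst_f_eq_xst_g_u hr0 hr hpu (le_of_lt hpv)]
      · rw [if_neg hcond, if_neg (fun hc => hcond ⟨h1.mp hc.1, hc.2.1, h2.mpr hc.2.2⟩)]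
    · push_neg at hr0
      rw [if_neg (fun hc => absurd hc.1.1 (not_le.2 (lt_of_lt_of_le hr0 hm0))),
        if_neg (fun hc => absurd hc.1.1 (not_le.2 (lt_of_lt_of_le hr0 hm0)))]
  · push_neg at hr
    rw [Set.indicator_of_notMem (by simpa using hr)]
    rcases eq_or_lt_of_le hr with hru | hru
    · rw [← hru]
      symm
      split
      · exact C.xst_g_uu
      · rfl
    · rw [if_neg (fun hc => absurd hc.2.2.1 (not_le.2 hru))]

theorem pointB_c {s m : ℝ} (hs : s ∈ Ico (0:ℝ) 1) (hm0 : 0 ≤ m) (hmu : m < u)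
    (hmp : pre f m (eAff u v s)) (r : ℝ) :
    Set.indicator (Iio u)ᶜ (fun ρ => if pre f m ρ ∧ m < ρ ∧ pre f ρ (eAff u v s)
        then cdel f ρ 0 (xst f ρ (eAff u v s)) else 0) (eAff u v r)
      = (if r = mrca h s 1 then cdel h (mrca h s 1) 0 (xst h (mrca h s 1) s) else 0)
        + (if pre h (mrca h s 1) r ∧ mrca h s 1 < r ∧ pre h r s
            then cdel h r 0 (xst h r s) else 0) := by
  have hm''0 : 0 ≤ mrca h s 1 := C.mrca_h1_nonneg hs
  have hm''s : mrca h s 1 ≤ s := C.mrca_h1_le hs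
  have hm''1 : mrca h s 1 ≤ 1 := le_trans hm''s (le_of_lt hs.2)
  by_cases hr0 : 0 ≤ r
  · have heu : u ≤ eAff u v r := C.u_le_e hr0
    rw [Set.indicator_of_mem (by simpa using not_lt.2 heu)]
    rcases lt_trichotomy r (mrca h s 1) with hrm | hrm | hrm
    · have hL : (if pre f m (eAff u v r) ∧ m < eAff u v r ∧
          pre f (eAff u v r) (eAff u v s)
          then cdel f (eAff u v r) 0 (xst f (eAff u v r) (eAff u v s)) else 0) = 0 := by
        split
        · rw [C.xst_zero_below_rho heu (C.e_lt_iff.mpr hrm)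
            (C.e_le_iff.mpr hm''s) (C.e_le_v hm''1) (C.lm_f_rho hs)]
          exact cdel_zero_zero (C.hf.jump_nonneg _
            ⟨C.e_nonneg hr0, C.e_le_one (le_trans (le_of_lt hrm) hm''1)⟩)
        · rfl
      rw [hL, if_neg (ne_of_lt hrm),
        if_neg (fun hc => absurd hc.2.1 (not_lt.2 (le_of_lt hrm))), add_zero]
    · rw [hrm]
      have hcond : pre f m (eAff u v (mrca h s 1)) ∧ m < eAff u v (mrca h s 1) ∧
          pre f (eAff u v (mrca h s 1)) (eAff u v s) := by
        refine ⟨⟨le_trans (le_of_lt hmu) (C.u_le_e hm''0), ?_⟩,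
          lt_of_lt_of_le hmu (C.u_le_e hm''0), ?_⟩
        · calc lm f m ≤ infIcc f m (eAff u v s) := hmp.2
            _ ≤ infIcc f m (eAff u v (mrca h s 1)) :=
              infIcc_mono C.hf le_rfl (C.e_le_iff.mpr hm''s)
                (le_trans (le_of_lt hmu) (C.u_le_e hm''0))
        · exact (C.pre_h hm''0 hs.2).mp (C.mrca_h1_spec hs).1
      rw [if_pos hcond, if_pos rfl, if_neg (fun hc => lt_irrefl _ hc.2.1), add_zero,
        cdel, cdel, ← C.jump_h hm''0 (lt_of_le_of_lt hm''s hs.2),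
        ← C.xst_h hm''0 hs.2]
    · rw [if_neg (ne_of_gt hrm), zero_add]
      by_cases hrs : r ≤ s
      · have hT1 : pre f m (eAff u v r) :=
          ⟨le_trans (le_of_lt hmu) heu,
            le_trans hmp.2 (infIcc_mono C.hf le_rfl (C.e_le_iff.mpr hrs)
              (le_trans (le_of_lt hmu) heu))⟩
        have hT2 : pre h (mrca h s 1) r := ⟨le_of_lt hrm, by
          rw [C.lm_h_mrca_h1 hs]; exact infIcc_nonneg C.hexc_h _ _⟩
        have hmlt : m < eAff u v r := lt_of_lt_of_le hmu heu
        have h2 : pre f (eAff u v r) (eAff u v s) ↔ pre h r s := (C.pre_h hr0 hs.2).symm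
        by_cases hc3 : pre h r s
        · rw [if_pos ⟨hT1, hmlt, h2.mpr hc3⟩, if_pos ⟨hT2, hrm, hc3⟩, cdel, cdel,
            ← C.jump_h hr0 (lt_of_le_of_lt hrs hs.2), ← C.xst_h hr0 hs.2]
        · rw [if_neg (fun hc => hc3 (h2.mp hc.2.2)), if_neg (fun hc => hc3 hc.2.2)]
      · push_neg at hrs
        rw [if_neg (fun hc => absurd (C.e_le_iff.mp hc.2.2.1) (not_le.2 hrs)),
          if_neg (fun hc => absurd hc.2.2.1 (not_le.2 hrs))]
  · push_neg at hr0
    have heru : eAff u v r < u := by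
      have h1 := (C.e_lt_iff (a := r) (b := 0)).mpr hr0
      rwa [C.e_zero] at h1
    rw [Set.indicator_of_notMem (by simpa using heru),
      if_neg (fun hc : r = mrca h s 1 => absurd (hc ▸ hm''0) (not_le.2 hr0)),
      if_neg (fun hc => absurd (lt_trans (lt_of_le_of_lt hm''0 hc.2.1) hr0) (lt_irrefl 0 ∘ fun x => x)), add_zero]

theorem pointB_x {s m : ℝ} (hs : s ∈ Ico (0:ℝ) 1) (hm0 : 0 ≤ m) (hmu : m < u)
    (hmp : pre f m (eAff u v s)) (r : ℝ) :
    Set.indicator (Iio u)ᶜ (fun ρ => if pre f m ρ ∧ m < ρ ∧ pre f ρ (eAff u v s)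
        then xst f ρ (eAff u v s) else 0) (eAff u v r)
      = (if r = mrca h s 1 then xst h (mrca h s 1) s else 0)
        + (if pre h (mrca h s 1) r ∧ mrca h s 1 < r ∧ pre h r s
            then xst h r s else 0) := by
  have hm''0 : 0 ≤ mrca h s 1 := C.mrca_h1_nonneg hs
  have hm''s : mrca h s 1 ≤ s := C.mrca_h1_le hs
  have hm''1 : mrca h s 1 ≤ 1 := le_trans hm''s (le_of_lt hs.2)
  by_cases hr0 : 0 ≤ r
  · have heu : u ≤ eAff u v r := C.u_le_e hr0
    rw [Set.indicator_of_mem (by simpa using not_lt.2 heu)]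
    rcases lt_trichotomy r (mrca h s 1) with hrm | hrm | hrm
    · have hL : (if pre f m (eAff u v r) ∧ m < eAff u v r ∧
          pre f (eAff u v r) (eAff u v s)
          then xst f (eAff u v r) (eAff u v s) else 0) = 0 := by
        split
        · exact C.xst_zero_below_rho heu (C.e_lt_iff.mpr hrm)
            (C.e_le_iff.mpr hm''s) (C.e_le_v hm''1) (C.lm_f_rho hs)
        · rfl
      rw [hL, if_neg (ne_of_lt hrm),
        if_neg (fun hc => absurd hc.2.1 (not_lt.2 (le_of_lt hrm))), add_zero]
    · rw [hrm]
      have hcond : pre f m (eAff u v (mrca h s 1)) ∧ m < eAff u v (mrca h s 1) ∧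
          pre f (eAff u v (mrca h s 1)) (eAff u v s) := by
        refine ⟨⟨le_trans (le_of_lt hmu) (C.u_le_e hm''0), ?_⟩,
          lt_of_lt_of_le hmu (C.u_le_e hm''0), ?_⟩
        · calc lm f m ≤ infIcc f m (eAff u v s) := hmp.2
            _ ≤ infIcc f m (eAff u v (mrca h s 1)) :=
              infIcc_mono C.hf le_rfl (C.e_le_iff.mpr hm''s)
                (le_trans (le_of_lt hmu) (C.u_le_e hm''0))
        · exact (C.pre_h hm''0 hs.2).mp (C.mrca_h1_spec hs).1
      rw [if_pos hcond, if_pos rfl, if_neg (fun hc => lt_irrefl _ hc.2.1), add_zero,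
        ← C.xst_h hm''0 hs.2]
    · rw [if_neg (ne_of_gt hrm), zero_add]
      by_cases hrs : r ≤ s
      · have hT1 : pre f m (eAff u v r) :=
          ⟨le_trans (le_of_lt hmu) heu,
            le_trans hmp.2 (infIcc_mono C.hf le_rfl (C.e_le_iff.mpr hrs)
              (le_trans (le_of_lt hmu) heu))⟩
        have hT2 : pre h (mrca h s 1) r := ⟨le_of_lt hrm, by
          rw [C.lm_h_mrca_h1 hs]; exact infIcc_nonneg C.hexc_h _ _⟩
        have hmlt : m < eAff u v r := lt_of_lt_of_le hmu heu
        have h2 : pre f (eAff u v r) (eAff u v s) ↔ pre h r s := (C.pre_h hr0 hs.2).symm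
        by_cases hc3 : pre h r s
        · rw [if_pos ⟨hT1, hmlt, h2.mpr hc3⟩, if_pos ⟨hT2, hrm, hc3⟩,
            ← C.xst_h hr0 hs.2]
        · rw [if_neg (fun hc => hc3 (h2.mp hc.2.2)), if_neg (fun hc => hc3 hc.2.2)]
      · push_neg at hrs
        rw [if_neg (fun hc => absurd (C.e_le_iff.mp hc.2.2.1) (not_le.2 hrs)),
          if_neg (fun hc => absurd hc.2.2.1 (not_le.2 hrs))]
  · push_neg at hr0
    have heru : eAff u v r < u := by
      have h1 := (C.e_lt_iff (a := r) (b := 0)).mpr hr0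
      rwa [C.e_zero] at h1
    rw [Set.indicator_of_notMem (by simpa using heru),
      if_neg (fun hc : r = mrca h s 1 => absurd (hc ▸ hm''0) (not_le.2 hr0)),
      if_neg (fun hc => absurd (lt_trans (lt_of_le_of_lt hm''0 hc.2.1) hr0) (lt_irrefl 0 ∘ fun x => x)), add_zero]

theorem summable_single (A : ℝ) (b : ℝ) : Summable (fun r : ℝ => if r = b then A else 0) := by
  apply summable_of_ne_finset_zero (s := {b})
  intro x hx
  exact if_neg (by simpa using hx)

theorem split_dO {s m : ℝ} (hs : s ∈ Ico (0:ℝ) 1) (hm0 : 0 ≤ m) (hmu : m < u)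
    (hmp : pre f m (eAff u v s)) :
    dO f m (eAff u v s)
      = dO g m u + (cdel h (mrca h s 1) (xst h (mrca h s 1) s) 0 + dO h (mrca h s 1) s) := by
  classical
  set F := fun ρ => if pre f m ρ ∧ m < ρ ∧ pre f ρ (eAff u v s)
    then cdel f ρ 0 (xst f ρ (eAff u v s)) else 0 with hF
  have hsumF : Summable F := summable_cterm C.hf hm0 (C.e_le_one (le_of_lt hs.2))
  have hsplit : dO f m (eAff u v s)
      = (∑' r, Set.indicator (Iio u) F r) + ∑' r, Set.indicator (Iio u)ᶜ F r := by
    rw [dO, ← Summable.tsum_add (hsumF.indicator _) (hsumF.indicator _)]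
    exact tsum_congr fun r => (congrFun (Set.indicator_self_add_compl (Iio u) F) r).symm
  rw [hsplit]
  congr 1
  · rw [dO]
    exact tsum_congr (C.pointA_c hs hm0 hmu)
  · rw [C.tsum_e (Set.indicator (Iio u)ᶜ F),
      tsum_congr (C.pointB_c hs hm0 hmu hmp),
      Summable.tsum_add (C.summable_single _ _)
        (summable_cterm C.hexc_h (C.mrca_h1_nonneg hs) (le_of_lt hs.2)),
      tsum_ite_eq, dO, cdel_comm]

theorem split_xsum {s m : ℝ} (hs : s ∈ Ico (0:ℝ) 1) (hm0 : 0 ≤ m) (hmu : m < u)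
    (hmp : pre f m (eAff u v s)) :
    (∑' ρ, if pre f m ρ ∧ m < ρ ∧ pre f ρ (eAff u v s)
        then xst f ρ (eAff u v s) else 0)
      = (∑' ρ, if pre g m ρ ∧ m < ρ ∧ pre g ρ u then xst g ρ u else 0)
        + (xst h (mrca h s 1) s
          + ∑' ρ, if pre h (mrca h s 1) ρ ∧ mrca h s 1 < ρ ∧ pre h ρ s
              then xst h ρ s else 0) := by
  classical
  set F := fun ρ => if pre f m ρ ∧ m < ρ ∧ pre f ρ (eAff u v s)
    then xst f ρ (eAff u v s) else 0 with hF
  have hsumF : Summable F := summable_xterm C.hf hm0 (C.e_le_one (le_of_lt hs.2))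
  have hsplit : (∑' ρ, F ρ)
      = (∑' r, Set.indicator (Iio u) F r) + ∑' r, Set.indicator (Iio u)ᶜ F r := by
    rw [← Summable.tsum_add (hsumF.indicator _) (hsumF.indicator _)]
    exact tsum_congr fun r => (congrFun (Set.indicator_self_add_compl (Iio u) F) r).symm
  rw [hsplit]
  congr 1
  · exact tsum_congr (C.pointA_x hs hm0 hmu)
  · rw [C.tsum_e (Set.indicator (Iio u)ᶜ F),
      tsum_congr (C.pointB_x hs hm0 hmu hmp),
      Summable.tsum_add (C.summable_single _ _)
        (summable_xterm C.hexc_h (C.mrca_h1_nonneg hs) (le_of_lt hs.2)),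
      tsum_ite_eq]

theorem split_dTanc {s m : ℝ} (hs : s ∈ Ico (0:ℝ) 1) (hm0 : 0 ≤ m) (hmu : m < u)
    (hmp : pre f m (eAff u v s)) :
    dTanc f m (eAff u v s) = dTanc g m u + dTanc h (mrca h s 1) s := by
  have hm''0 : 0 ≤ mrca h s 1 := C.mrca_h1_nonneg hs
  have hm''s : mrca h s 1 ≤ s := C.mrca_h1_le hs
  have hpreρ : pre f (eAff u v (mrca h s 1)) (eAff u v s) :=
    (C.pre_h hm''0 hs.2).mp (C.mrca_h1_spec hs).1
  have hx : xst h (mrca h s 1) s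
      = infIcc f (eAff u v (mrca h s 1)) (eAff u v s) - lm f u := by
    rw [C.xst_h hm''0 hs.2, xst_eq f hpreρ, C.lm_f_rho hs]
  unfold dTanc
  rw [C.split_xsum hs hm0 hmu hmp, hx, C.g_eqc ⟨le_rfl, C.hlt⟩, C.infIcc_g_ru hm0 hmu,
    C.infIcc_left_absorb hm0 hmu (C.u_le_e hs.1) (le_of_lt (C.e_lt_v hs.2)),
    C.h_eq ⟨hs.1, hs.2⟩, C.infIcc_h hm''0 hm''s hs.2]
  ring

end Ctx
namespace Ctx

open Aux

variable {f g h : ℝ → ℝ} {u v : ℝ} (C : Ctx f g h u v)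
include C

/-- Common assembly for the cases where the mrca lies strictly below `u`. -/
theorem part3_low {s a : ℝ} (hs : s ∈ Ico (0:ℝ) 1) (ha : a ∈ Icc (0:ℝ) 1)
    (ha' : a ∉ Ico u v) (hmu : mrca f (eAff u v s) a < u)
    (hmeq : mrca g a u = mrca f (eAff u v s) a) :
    dL f (eAff u v s) a = dL g a u + dL h s 1 ∧
    dT f (eAff u v s) a = dT g a u + dT h s 1 := by
  have hpI : eAff u v s ∈ Icc (0:ℝ) 1 := ⟨C.e_nonneg hs.1, C.e_le_one (le_of_lt hs.2)⟩
  have spec := mrca_spec C.hf hpI ha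
  have hm0 : 0 ≤ mrca f (eAff u v s) a := mrca_nonneg C.hf hpI.1 ha.1
  have hma : mrca f (eAff u v s) a ≤ a := spec.2.1
  have hmIoo : mrca f (eAff u v s) a ∉ Ioo u v :=
    fun hc => absurd hc.1 (not_lt.2 (le_of_lt hmu))
  have hxfp : xst f (mrca f (eAff u v s) a) (eAff u v s)
      = xst g (mrca f (eAff u v s) a) u :=
    C.xst_f_eq_xst_g_u hm0 hmu (C.u_le_e hs.1) (le_of_lt (C.e_lt_v hs.2))
  have hxfa : xst f (mrca f (eAff u v s) a) a = xst g (mrca f (eAff u v s) a) a :=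
    (C.xst_g' hmIoo ha').symm
  have hjump : jump g (mrca f (eAff u v s) a) = jump f (mrca f (eAff u v s) a) :=
    C.jump_g_out (fun hc => absurd hc.1 (not_le.2 hmu))
  have hhead : cdel f (mrca f (eAff u v s) a) (xst f (mrca f (eAff u v s) a) (eAff u v s))
        (xst f (mrca f (eAff u v s) a) a)
      = cdel g (mrca f (eAff u v s) a) (xst g (mrca f (eAff u v s) a) a)
        (xst g (mrca f (eAff u v s) a) u) := by
    rw [cdel, cdel, hxfp, hxfa, hjump,
      abs_sub_comm (xst g (mrca f (eAff u v s) a) u) (xst g (mrca f (eAff u v s) a) a)]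
  constructor
  · rw [dL, dL, hmeq, C.dL_h_one hs, C.split_dO hs hm0 hmu spec.1,
      C.dO_gf hm0 hmIoo ha.2 ha', hhead]
    ring
  · rw [dT, dT, hmeq, C.dT_h_one hs, C.split_dTanc hs hm0 hmu spec.1,
      C.dTanc_gf hm0 hmIoo hma ha.2 ha']
    ring

/-- Case A: `a < u`. -/
theorem mrca_ga_eq_A {s a : ℝ} (hs : s ∈ Ico (0:ℝ) 1) (hau : a < u) :
    mrca g a u = mrca f (eAff u v s) a := by
  have haIco : a ∉ Ico u v := fun hc => absurd hc.1 (not_le.2 hau)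
  unfold mrca
  congr 1
  ext r
  simp only [mem_setOf_eq]
  constructor
  · rintro ⟨hr0, hra, hru⟩
    have hrlt : r < u := lt_of_le_of_lt hra.1 hau
    have hrIoo : r ∉ Ioo u v := fun hc => absurd hc.1 (not_lt.2 (le_of_lt hrlt))
    exact ⟨hr0, (C.pre_f_iff_pre_g_u hr0 hrlt (C.u_le_e hs.1)
        (le_of_lt (C.e_lt_v hs.2))).mpr hru,
      (C.pre_g' hrIoo haIco).mp hra⟩
  · rintro ⟨hr0, hrp, hra⟩
    have hrlt : r < u := lt_of_le_of_lt hra.1 hau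
    have hrIoo : r ∉ Ioo u v := fun hc => absurd hc.1 (not_lt.2 (le_of_lt hrlt))
    exact ⟨hr0, (C.pre_g' hrIoo haIco).mpr hra,
      (C.pre_f_iff_pre_g_u hr0 hrlt (C.u_le_e hs.1) (le_of_lt (C.e_lt_v hs.2))).mp hrp⟩

/-- Case B2: `v ≤ a` and the infimum after `v` dips below `f(u−)`. -/
theorem mrca_ga_eq_B2 {s a : ℝ} (hs : s ∈ Ico (0:ℝ) 1) (hva : v ≤ a)
    (hB2 : infIcc f v a < lm f u) : mrca g a u = mrca f (eAff u v s) a := by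
  have haIco : a ∉ Ico u v := fun hc => absurd hc.2 (not_lt.2 hva)
  unfold mrca
  congr 1
  ext r
  simp only [mem_setOf_eq]
  constructor
  · rintro ⟨hr0, hra, hru⟩
    have hrlt : r < u := by
      rcases lt_or_eq_of_le hru.1 with h1 | h1
      · exact h1
      · exfalso
        have h2 : lm g r ≤ infIcc g r a := hra.2
        rw [h1] at h2
        rw [C.lm_g_out' (fun hc => lt_irrefl u hc.1)] at h2
        have h3 : infIcc g u a ≤ infIcc g v a :=
          infIcc_mono C.hexc_g (le_of_lt C.hlt) le_rfl hva
        rw [C.infIcc_g hva haIco] at h3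
        linarith
    have hrIoo : r ∉ Ioo u v := fun hc => absurd hc.1 (not_lt.2 (le_of_lt hrlt))
    exact ⟨hr0, (C.pre_f_iff_pre_g_u hr0 hrlt (C.u_le_e hs.1)
        (le_of_lt (C.e_lt_v hs.2))).mpr hru,
      (C.pre_g' hrIoo haIco).mp hra⟩
  · rintro ⟨hr0, hrp, hra⟩
    have hrlt : r < u := by
      by_contra hc
      push_neg at hc
      have hrv : r < v := lt_of_le_of_lt hrp.1 (C.e_lt_v hs.2)
      have h1 : lm f u ≤ lm f r := by
        rcases lt_or_eq_of_le hc with h2 | h2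
        · exact C.c_le_lm h2 (le_of_lt hrv)
        · rw [← h2]
      have h2 : infIcc f r a ≤ infIcc f v a :=
        infIcc_mono C.hf (le_of_lt hrv) le_rfl hva
      linarith [hra.2]
    have hrIoo : r ∉ Ioo u v := fun hc => absurd hc.1 (not_lt.2 (le_of_lt hrlt))
    exact ⟨hr0, (C.pre_g' hrIoo haIco).mpr hra,
      (C.pre_f_iff_pre_g_u hr0 hrlt (C.u_le_e hs.1) (le_of_lt (C.e_lt_v hs.2))).mp hrp⟩

theorem mrca_low_B2 {s a : ℝ} (hs : s ∈ Ico (0:ℝ) 1) (ha : a ∈ Icc (0:ℝ) 1)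
    (hva : v ≤ a) (hB2 : infIcc f v a < lm f u) : mrca f (eAff u v s) a < u := by
  have hpI : eAff u v s ∈ Icc (0:ℝ) 1 := ⟨C.e_nonneg hs.1, C.e_le_one (le_of_lt hs.2)⟩
  have spec := mrca_spec C.hf hpI ha
  by_contra hc
  push_neg at hc
  have hmv : mrca f (eAff u v s) a < v := lt_of_le_of_lt spec.1.1 (C.e_lt_v hs.2)
  have h1 : lm f u ≤ lm f (mrca f (eAff u v s) a) := by
    rcases lt_or_eq_of_le hc with h2 | h2
    · exact C.c_le_lm h2 (le_of_lt hmv)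
    · rw [← h2]
  have h2 : infIcc f (mrca f (eAff u v s) a) a ≤ infIcc f v a :=
    infIcc_mono C.hf (le_of_lt hmv) le_rfl hva
  linarith [spec.2.2]

end Ctx
namespace Ctx

open Aux

variable {f g h : ℝ → ℝ} {u v : ℝ} (C : Ctx f g h u v)
include C

theorem infIcc_g_uv : infIcc g u v = lm f u := by
  apply le_antisymm
  · calc infIcc g u v ≤ g u := infIcc_le C.hexc_g ⟨le_rfl, le_of_lt C.hlt⟩
      _ = lm f u := C.g_eqc ⟨le_rfl, C.hlt⟩
  · apply le_infIcc (le_of_lt C.hlt)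
    intro x hx
    by_cases hxm : x ∈ Ico u v
    · rw [C.g_eqc hxm]
    · have hxv : x = v := le_antisymm hx.2 (C.out_ge hxm hx.1)
      rw [hxv, C.g_eq_v]
      exact C.K1 v ⟨le_of_lt C.hlt, le_rfl⟩

theorem c_le_infIcc_ext {ρ a' : ℝ} (hρu : u ≤ ρ) (hρv : ρ < v) (hva : v ≤ a')
    (hB1 : lm f u ≤ infIcc f v a') : lm f u ≤ infIcc f ρ a' := by
  apply le_infIcc (le_trans (le_of_lt hρv) hva)
  intro x hx
  by_cases hxv : x ≤ v
  · exact C.K1 x ⟨le_trans hρu hx.1, hxv⟩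
  · push_neg at hxv
    calc lm f u ≤ infIcc f v a' := hB1
      _ ≤ f x := infIcc_le C.hf ⟨le_of_lt hxv, hx.2⟩

theorem mrca_gau_B1 {a : ℝ} (ha0 : 0 ≤ a) (hva : v ≤ a)
    (hB1 : lm f u ≤ infIcc f v a) : mrca g a u = u := by
  have hlmgu : lm g u = lm f u := C.lm_g_out' (fun hc => lt_irrefl u hc.1)
  apply le_antisymm (mrca_le_right C.hexc_g ha0 C.hu0)
  apply le_csSup (bddAbove_anc a u)
  refine ⟨C.hu0, ⟨le_trans (le_of_lt C.hlt) hva, ?_⟩, ⟨le_rfl, ?_⟩⟩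
  · rw [hlmgu]
    apply le_infIcc (le_trans (le_of_lt C.hlt) hva)
    intro x hx
    by_cases hxm : x ∈ Ico u v
    · rw [C.g_eqc hxm]
    · rw [C.g_eq hxm]
      calc lm f u ≤ infIcc f v a := hB1
        _ ≤ f x := infIcc_le C.hf ⟨C.out_ge hxm hx.1, hx.2⟩
  · rw [hlmgu, infIcc_self C.hexc_g, C.g_eqc ⟨le_rfl, C.hlt⟩]

theorem mrca_f_B1 {s a : ℝ} (hs : s ∈ Ico (0:ℝ) 1) (ha : a ∈ Icc (0:ℝ) 1) (hva : v ≤ a)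
    (hB1 : lm f u ≤ infIcc f v a) :
    mrca f (eAff u v s) a = eAff u v (mrca h s 1) := by
  have hpI : eAff u v s ∈ Icc (0:ℝ) 1 := ⟨C.e_nonneg hs.1, C.e_le_one (le_of_lt hs.2)⟩
  have spec := mrca_spec C.hf hpI ha
  have hm''0 : 0 ≤ mrca h s 1 := C.mrca_h1_nonneg hs
  have hm''s : mrca h s 1 ≤ s := C.mrca_h1_le hs
  have hm''lt1 : mrca h s 1 < 1 := lt_of_le_of_lt hm''s hs.2
  have hρu : u ≤ eAff u v (mrca h s 1) := C.u_le_e hm''0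
  have hρv : eAff u v (mrca h s 1) < v := C.e_lt_v hm''lt1
  have hgeq : eAff u v (mrca h s 1) ≤ mrca f (eAff u v s) a := by
    apply le_csSup (bddAbove_anc _ _)
    refine ⟨C.e_nonneg hm''0, (C.pre_h hm''0 hs.2).mp (C.mrca_h1_spec hs).1,
      ⟨le_trans (le_of_lt hρv) hva, ?_⟩⟩
    rw [C.lm_f_rho hs]
    exact C.c_le_infIcc_ext hρu hρv hva hB1
  have hmu' : u ≤ mrca f (eAff u v s) a := le_trans hρu hgeq
  have hmv : mrca f (eAff u v s) a < v := lt_of_le_of_lt spec.1.1 (C.e_lt_v hs.2)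
  have hlm_le : lm f (mrca f (eAff u v s) a) ≤ lm f u :=
    le_trans spec.2.2 (C.inf_le_c_v hmv hva)
  have hlm_ge : lm f u ≤ lm f (mrca f (eAff u v s) a) := by
    rcases lt_or_eq_of_le hmu' with h2 | h2
    · exact C.c_le_lm h2 (le_of_lt hmv)
    · rw [← h2]
  refine le_antisymm ?_ hgeq
  have hez : eAff u v ((mrca f (eAff u v s) a - u) / (v - u)) = mrca f (eAff u v s) a :=
    C.e_inv _
  have hz0 : 0 ≤ (mrca f (eAff u v s) a - u) / (v - u) := by
    apply C.e_le_iff.mp; rw [hez, C.e_zero]; exact hmu'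
  have hz1 : (mrca f (eAff u v s) a - u) / (v - u) ≤ s := by
    apply C.e_le_iff.mp; rw [hez]; exact spec.1.1
  have hzS : (mrca f (eAff u v s) a - u) / (v - u)
      ∈ {r : ℝ | 0 ≤ r ∧ pre h r s ∧ pre h r 1} := by
    refine ⟨hz0, ?_, ?_⟩
    · rw [C.pre_h hz0 hs.2, hez]; exact spec.1
    · rw [C.pre_h_one (le_trans hz1 (le_of_lt hs.2)),
        C.lm_h hz0 (le_trans hz1 (le_of_lt hs.2)), hez]
      linarith
  have hle := le_csSup (bddAbove_anc s 1) hzS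
  calc mrca f (eAff u v s) a
      = eAff u v ((mrca f (eAff u v s) a - u) / (v - u)) := hez.symm
    _ ≤ eAff u v (mrca h s 1) := C.e_le_iff.mpr hle

theorem pointB1_c {s a : ℝ} (hs : s ∈ Ico (0:ℝ) 1) (hva : v ≤ a)
    (hB1 : lm f u ≤ infIcc f v a) (r : ℝ) :
    (if pre f (eAff u v (mrca h s 1)) r ∧ eAff u v (mrca h s 1) < r ∧ pre f r a
        then cdel f r 0 (xst f r a) else 0)
      = (if pre g u r ∧ u < r ∧ pre g r a then cdel g r 0 (xst g r a) else 0) := by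
  have hm''0 : 0 ≤ mrca h s 1 := C.mrca_h1_nonneg hs
  have hm''lt1 : mrca h s 1 < 1 := lt_of_le_of_lt (C.mrca_h1_le hs) hs.2
  have hρu : u ≤ eAff u v (mrca h s 1) := C.u_le_e hm''0
  have hρv : eAff u v (mrca h s 1) < v := C.e_lt_v hm''lt1
  have haIco : a ∉ Ico u v := fun hc => absurd hc.2 (not_lt.2 hva)
  rcases le_or_gt r u with hru | hru
  · rw [if_neg (fun hc => absurd hc.2.1 (not_lt.2 (le_trans hru hρu))),
      if_neg (fun hc => absurd hc.2.1 (not_lt.2 hru))]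
  · by_cases hrv : r < v
    · trans (0:ℝ)
      · split
        · rw [C.xst_f_mid_zero ⟨hru, hrv⟩ hva]
          exact cdel_zero_zero (C.hf.jump_nonneg r
            ⟨le_trans C.hu0 (le_of_lt hru), le_trans (le_of_lt hrv) C.hv1⟩)
        · rfl
      · symm
        split
        · rw [C.xst_g_mid_zero ⟨le_of_lt hru, hrv⟩ hva,
            cdel_zero_zero (le_of_eq (C.jump_g_in ⟨le_of_lt hru, hrv⟩).symm)]
        · rfl
    · push_neg at hrv
      have hrIoo : r ∉ Ioo u v := fun hc => absurd hc.2 (not_lt.2 hrv)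
      have hrIco : r ∉ Ico u v := fun hc => absurd hc.2 (not_lt.2 hrv)
      have c1 : pre f (eAff u v (mrca h s 1)) r ↔ lm f u ≤ infIcc f v r := by
        unfold pre
        rw [infIcc_split C.hf (le_of_lt hρv) hrv, C.inf_pv_eq_c hρu hρv, C.lm_f_rho hs]
        constructor
        · rintro ⟨-, h2⟩; exact le_trans h2 (min_le_right _ _)
        · intro h2; exact ⟨le_trans (le_of_lt hρv) hrv, le_min le_rfl h2⟩
      have c2 : pre g u r ↔ lm f u ≤ infIcc f v r := by
        unfold pre
        rw [infIcc_split C.hexc_g (le_of_lt C.hlt) hrv, C.infIcc_g_uv,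
          C.infIcc_g hrv hrIco, C.lm_g_out' (fun hc => lt_irrefl u hc.1)]
        constructor
        · rintro ⟨-, h2⟩; exact le_trans h2 (min_le_right _ _)
        · intro h2; exact ⟨le_trans (le_of_lt C.hlt) hrv, le_min le_rfl h2⟩
      have c3 : pre f r a ↔ pre g r a := (C.pre_g' hrIoo haIco).symm
      have hiff : (pre f (eAff u v (mrca h s 1)) r ∧ eAff u v (mrca h s 1) < r ∧
          pre f r a) ↔ (pre g u r ∧ u < r ∧ pre g r a) := by
        constructor
        · rintro ⟨h1, h2, h3⟩; exact ⟨c2.mpr (c1.mp h1), hru, c3.mp h3⟩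
        · rintro ⟨h1, h2, h3⟩
          exact ⟨c1.mpr (c2.mp h1), lt_of_lt_of_le hρv hrv, c3.mpr h3⟩
      by_cases hcond : pre g u r ∧ u < r ∧ pre g r a
      · rw [if_pos (hiff.mpr hcond), if_pos hcond, C.xst_g' hrIoo haIco, cdel, cdel,
          C.jump_g_out' hrIoo (ne_of_gt hru)]
      · rw [if_neg (fun hc => hcond (hiff.mp hc)), if_neg hcond]

theorem pointB1_x {s a : ℝ} (hs : s ∈ Ico (0:ℝ) 1) (hva : v ≤ a)
    (hB1 : lm f u ≤ infIcc f v a) (r : ℝ) :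
    (if pre f (eAff u v (mrca h s 1)) r ∧ eAff u v (mrca h s 1) < r ∧ pre f r a
        then xst f r a else 0)
      = (if pre g u r ∧ u < r ∧ pre g r a then xst g r a else 0) := by
  have hm''0 : 0 ≤ mrca h s 1 := C.mrca_h1_nonneg hs
  have hm''lt1 : mrca h s 1 < 1 := lt_of_le_of_lt (C.mrca_h1_le hs) hs.2
  have hρu : u ≤ eAff u v (mrca h s 1) := C.u_le_e hm''0
  have hρv : eAff u v (mrca h s 1) < v := C.e_lt_v hm''lt1
  have haIco : a ∉ Ico u v := fun hc => absurd hc.2 (not_lt.2 hva)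
  rcases le_or_gt r u with hru | hru
  · rw [if_neg (fun hc => absurd hc.2.1 (not_lt.2 (le_trans hru hρu))),
      if_neg (fun hc => absurd hc.2.1 (not_lt.2 hru))]
  · by_cases hrv : r < v
    · trans (0:ℝ)
      · split
        · exact C.xst_f_mid_zero ⟨hru, hrv⟩ hva
        · rfl
      · symm
        split
        · exact C.xst_g_mid_zero ⟨le_of_lt hru, hrv⟩ hva
        · rfl
    · push_neg at hrv
      have hrIoo : r ∉ Ioo u v := fun hc => absurd hc.2 (not_lt.2 hrv)
      have hrIco : r ∉ Ico u v := fun hc => absurd hc.2 (not_lt.2 hrv)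
      have c1 : pre f (eAff u v (mrca h s 1)) r ↔ lm f u ≤ infIcc f v r := by
        unfold pre
        rw [infIcc_split C.hf (le_of_lt hρv) hrv, C.inf_pv_eq_c hρu hρv, C.lm_f_rho hs]
        constructor
        · rintro ⟨-, h2⟩; exact le_trans h2 (min_le_right _ _)
        · intro h2; exact ⟨le_trans (le_of_lt hρv) hrv, le_min le_rfl h2⟩
      have c2 : pre g u r ↔ lm f u ≤ infIcc f v r := by
        unfold pre
        rw [infIcc_split C.hexc_g (le_of_lt C.hlt) hrv, C.infIcc_g_uv,
          C.infIcc_g hrv hrIco, C.lm_g_out' (fun hc => lt_irrefl u hc.1)]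
        constructor
        · rintro ⟨-, h2⟩; exact le_trans h2 (min_le_right _ _)
        · intro h2; exact ⟨le_trans (le_of_lt C.hlt) hrv, le_min le_rfl h2⟩
      have c3 : pre f r a ↔ pre g r a := (C.pre_g' hrIoo haIco).symm
      have hiff : (pre f (eAff u v (mrca h s 1)) r ∧ eAff u v (mrca h s 1) < r ∧
          pre f r a) ↔ (pre g u r ∧ u < r ∧ pre g r a) := by
        constructor
        · rintro ⟨h1, h2, h3⟩; exact ⟨c2.mpr (c1.mp h1), hru, c3.mp h3⟩
        · rintro ⟨h1, h2, h3⟩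
          exact ⟨c1.mpr (c2.mp h1), lt_of_lt_of_le hρv hrv, c3.mpr h3⟩
      by_cases hcond : pre g u r ∧ u < r ∧ pre g r a
      · rw [if_pos (hiff.mpr hcond), if_pos hcond, C.xst_g' hrIoo haIco]
      · rw [if_neg (fun hc => hcond (hiff.mp hc)), if_neg hcond]

theorem part3_B1 {s a : ℝ} (hs : s ∈ Ico (0:ℝ) 1) (ha : a ∈ Icc (0:ℝ) 1) (hva : v ≤ a)
    (hB1 : lm f u ≤ infIcc f v a) :
    dL f (eAff u v s) a = dL g a u + dL h s 1 ∧
    dT f (eAff u v s) a = dT g a u + dT h s 1 := by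
  have haIco : a ∉ Ico u v := fun hc => absurd hc.2 (not_lt.2 hva)
  have hm''0 : 0 ≤ mrca h s 1 := C.mrca_h1_nonneg hs
  have hm''s : mrca h s 1 ≤ s := C.mrca_h1_le hs
  have hm''lt1 : mrca h s 1 < 1 := lt_of_le_of_lt hm''s hs.2
  have hm''1 : mrca h s 1 ≤ 1 := le_of_lt hm''lt1
  have hρu : u ≤ eAff u v (mrca h s 1) := C.u_le_e hm''0
  have hρv : eAff u v (mrca h s 1) < v := C.e_lt_v hm''lt1
  have hmgu : mrca g a u = u := C.mrca_gau_B1 ha.1 hva hB1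
  have hmfeq : mrca f (eAff u v s) a = eAff u v (mrca h s 1) := C.mrca_f_B1 hs ha hva hB1
  have hzero : ∀ r : ℝ, ¬(pre g u r ∧ u < r ∧ pre g r u) := by
    rintro r ⟨-, h2, h3⟩
    exact absurd (lt_of_lt_of_le h2 h3.1) (lt_irrefl u)
  have hdOguu : dO g u u = 0 := by
    rw [dO, tsum_congr (fun r => if_neg (hzero r)), tsum_zero]
  have hdTguu : dTanc g u u = 0 := by
    rw [dTanc, tsum_congr (fun r => if_neg (hzero r)), tsum_zero,
      infIcc_self C.hexc_g]
    ring
  have hheadg : cdel g u (xst g u a) (xst g u u) = 0 := by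
    rw [C.xst_g_from_u (le_trans (le_of_lt C.hlt) hva), C.xst_g_uu,
      cdel_zero_zero (le_of_eq (C.jump_g_in ⟨le_rfl, C.hlt⟩).symm)]
  have hxf_a : xst f (eAff u v (mrca h s 1)) a = 0 := by
    unfold xst
    rw [if_pos (le_trans (le_of_lt hρv) hva)]
    apply max_eq_right
    have h1 := C.inf_le_c_v hρv hva
    rw [C.lm_f_rho hs]
    linarith
  have hxh1 : xst h (mrca h s 1) 1 = 0 :=
    C.xst_h_one_zero hm''1 (le_of_eq (C.lm_h_mrca_h1 hs).symm)
  have hhead : cdel f (eAff u v (mrca h s 1)) (xst f (eAff u v (mrca h s 1)) (eAff u v s))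
        (xst f (eAff u v (mrca h s 1)) a)
      = cdel h (mrca h s 1) (xst h (mrca h s 1) s) 0 := by
    rw [hxf_a, cdel, cdel, ← C.jump_h hm''0 hm''lt1, ← C.xst_h hm''0 hs.2]
  have hdOfa : dO f (eAff u v (mrca h s 1)) a = dO g u a := by
    rw [dO, dO]; exact tsum_congr (C.pointB1_c hs hva hB1)
  have hdTfa : dTanc f (eAff u v (mrca h s 1)) a = dTanc g u a := by
    have h1 : infIcc f (eAff u v (mrca h s 1)) a = lm f u := by
      rw [infIcc_split C.hf (le_of_lt hρv) hva, C.inf_pv_eq_c hρu hρv, min_eq_left hB1]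
    have h2 : infIcc g u a = lm f u := by
      rw [infIcc_split C.hexc_g (le_of_lt C.hlt) hva, C.infIcc_g_uv,
        C.infIcc_g hva haIco, min_eq_left hB1]
    rw [dTanc, dTanc, tsum_congr (C.pointB1_x hs hva hB1), C.g_eq haIco, h1, h2]
  constructor
  · rw [dL, dL, hmgu, hmfeq, C.dL_h_one hs, C.dO_fh hm''0 hs.2, hhead, hdOfa,
      hheadg, hdOguu]
    ring
  · rw [dT, dT, hmgu, hmfeq, C.dT_h_one hs, C.dTanc_fh hm''0 hm''s hs.2, hdTfa, hdTguu]
    ring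

/-- Part 3 of the theorem. -/
theorem part3 {s a : ℝ} (hs : s ∈ Ico (0:ℝ) 1) (ha : a ∈ Icc (0:ℝ) 1 \ Ico u v) :
    dL f (u + s * (v - u)) a = dL g a u + dL h s 1 ∧
    dT f (u + s * (v - u)) a = dT g a u + dT h s 1 := by
  have hes : u + s * (v - u) = eAff u v s := rfl
  rw [hes]
  obtain ⟨ha1, ha2⟩ := ha
  rcases not_and_or.mp (fun hc : u ≤ a ∧ a < v => ha2 hc) with h1 | h2
  · push_neg at h1
    have hpI : eAff u v s ∈ Icc (0:ℝ) 1 := ⟨C.e_nonneg hs.1, C.e_le_one (le_of_lt hs.2)⟩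
    have spec := mrca_spec C.hf hpI ha1
    exact C.part3_low hs ha1 ha2 (lt_of_le_of_lt spec.2.1 h1) (C.mrca_ga_eq_A hs h1)
  · push_neg at h2
    rcases lt_or_ge (infIcc f v a) (lm f u) with hB2 | hB1
    · exact C.part3_low hs ha1 ha2 (C.mrca_low_B2 hs ha1 h2 hB2)
        (C.mrca_ga_eq_B2 hs h2 hB2)
    · exact C.part3_B1 hs ha1 h2 hB1

end Ctx

theorem statement6 (f : ℝ → ℝ) (hf : IsExcursion f) (u v : ℝ)
    (hu : u ∈ Icc (0:ℝ) 1) (hv : v ∈ Icc (0:ℝ) 1)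
    (huv : pre f u v) (hlt : u < v) (hlm : lm f u = lm f v)
    (g h : ℝ → ℝ)
    (hg : ∀ t, g t = if t ∈ Ico u v then lm f u else f t)
    (hh : ∀ t, h t = if t ∈ Ico (0:ℝ) 1 then f (u + t * (v - u)) - lm f u else 0) :
    IsExcursion g ∧ IsExcursion h ∧
    (∀ a ∈ Icc (0:ℝ) 1 \ Ico u v, ∀ b ∈ Icc (0:ℝ) 1 \ Ico u v,
        dL f a b = dL g a b ∧ dT f a b = dT g a b) ∧
    (∀ s ∈ Ico (0:ℝ) 1, ∀ t ∈ Ico (0:ℝ) 1,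
        dL f (u + s * (v - u)) (u + t * (v - u)) = dL h s t ∧
        dT f (u + s * (v - u)) (u + t * (v - u)) = dT h s t) ∧
    (∀ s ∈ Ico (0:ℝ) 1, ∀ a ∈ Icc (0:ℝ) 1 \ Ico u v,
        dL f (u + s * (v - u)) a = dL g a u + dL h s 1 ∧
        dT f (u + s * (v - u)) a = dT g a u + dT h s 1) := by
  have C : Ctx f g h u v := ⟨hf, hu, hv, huv, hlt, hlm, hg, hh⟩
  refine ⟨C.hexc_g, C.hexc_h, ?_, ?_, ?_⟩
  · intro a ha b hb
    exact C.part1 ha hb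
  · intro s hs t ht
    exact C.part2 hs ht
  · intro s hs a ha
    exact C.part3 hs ha
end
end

section
/- Let f be an excursion and let s,t ∈ [0,1]. If s ⪯_f t, then d_T[f](t,1) = d_T[f](s,1) + d_T[f](s,t). -/
open Set Filter Topology
open scoped Classical

noncomputable section

namespace Helper

variable {f : ℝ → ℝ}

lemma f_nn (hf : IsExcursion f) : ∀ x, 0 ≤ f x := fun x => by
  by_cases h : x ∈ Set.Icc (0:ℝ) 1
  · exact hf.nonneg x h
  · rw [hf.zero_outside x h]

lemma lm_nn (hf : IsExcursion f) {r : ℝ} (h0 : 0 ≤ r) (h1 : r ≤ 1) : 0 ≤ lm f r := by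
  rcases eq_or_lt_of_le h0 with h | h
  · simp [lm, ← h]
  · rw [lm, if_neg (ne_of_gt h)]
    exact ge_of_tendsto (hf.leftLimEx r ⟨h, h1⟩) (Eventually.of_forall fun x => f_nn hf x)

lemma infIcc_bdd (hf : IsExcursion f) (s t : ℝ) : BddBelow (f '' Set.Icc s t) :=
  ⟨0, by rintro y ⟨x, -, rfl⟩; exact f_nn hf x⟩

lemma infIcc_le (hf : IsExcursion f) {s t x : ℝ} (hx : x ∈ Set.Icc s t) : infIcc f s t ≤ f x :=
  csInf_le (infIcc_bdd hf s t) ⟨x, hx, rfl⟩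

lemma infIcc_nonneg (hf : IsExcursion f) (s t : ℝ) : 0 ≤ infIcc f s t := by
  by_cases h : s ≤ t
  · exact le_csInf ⟨f s, ⟨s, ⟨le_refl s, h⟩, rfl⟩⟩ (by rintro y ⟨x, -, rfl⟩; exact f_nn hf x)
  · rw [infIcc, Set.Icc_eq_empty h, Set.image_empty]
    simp [Real.sInf_empty]

lemma infIcc_self (s : ℝ) : infIcc f s s = f s := by
  rw [infIcc, Set.Icc_self, Set.image_singleton, csInf_singleton]

lemma infIcc_anti (hf : IsExcursion f) {s s' t' t : ℝ} (h1 : s ≤ s') (h2 : t' ≤ t)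
    (h : s' ≤ t') : infIcc f s t ≤ infIcc f s' t' :=
  le_csInf ⟨f s', ⟨s', ⟨le_refl s', h⟩, rfl⟩⟩
    (by rintro y ⟨x, hx, rfl⟩; exact infIcc_le hf ⟨h1.trans hx.1, hx.2.trans h2⟩)

lemma infIcc_split (hf : IsExcursion f) {s u t : ℝ} (h1 : s ≤ u) (h2 : u ≤ t) :
    infIcc f s t = min (infIcc f s u) (infIcc f u t) := by
  rw [infIcc, ← Set.Icc_union_Icc_eq_Icc h1 h2, Set.image_union,
    csInf_union (infIcc_bdd hf s u) ⟨f s, ⟨s, ⟨le_refl s, h1⟩, rfl⟩⟩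
      (infIcc_bdd hf u t) ⟨f u, ⟨u, ⟨le_refl u, h2⟩, rfl⟩⟩]
  rfl

lemma infIcc_le_lm (hf : IsExcursion f) {a b t : ℝ} (hab : a < b) (hbt : b ≤ t)
    (hb0 : 0 < b) (hb1 : b ≤ 1) : infIcc f a t ≤ lm f b := by
  rw [lm, if_neg (ne_of_gt hb0)]
  refine ge_of_tendsto (hf.leftLimEx b ⟨hb0, hb1⟩) ?_
  filter_upwards [Ioo_mem_nhdsLT hab] with x hx
  exact infIcc_le hf ⟨hx.1.le, hx.2.le.trans hbt⟩

lemma infIcc_zero (hf : IsExcursion f) {s b t : ℝ} (hsb : s < b) (hbt : b ≤ t)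
    (hb0 : 0 < b) (hb1 : b ≤ 1) (hlm : lm f b = 0) : infIcc f s t = 0 := by
  refine le_antisymm ?_ (infIcc_nonneg hf s t)
  have key : ∀ ε : ℝ, 0 < ε → infIcc f s t ≤ ε := by
    intro ε hε
    have hL : Function.leftLim f b = 0 := by rwa [lm, if_neg (ne_of_gt hb0)] at hlm
    have htd : Tendsto f (𝓝[<] b) (𝓝 0) := hL ▸ hf.leftLimEx b ⟨hb0, hb1⟩
    have hev : ∀ᶠ x in 𝓝[<] b, x ∈ Set.Ioo s b ∧ f x < ε := by
      filter_upwards [Ioo_mem_nhdsLT hsb, htd.eventually (eventually_lt_nhds hε)]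
        with x h1 h2 using ⟨h1, h2⟩
    obtain ⟨x, hx, hfx⟩ := hev.exists
    exact (infIcc_le hf ⟨hx.1.le, hx.2.le.trans hbt⟩).trans hfx.le
  have := le_of_forall_pos_le_add (a := infIcc f s t) (b := 0) (by simpa using key)
  simpa using this

lemma infIcc_one (hf : IsExcursion f) {r : ℝ} (h1 : r ≤ 1) : infIcc f r 1 = 0 := by
  refine le_antisymm ?_ (infIcc_nonneg hf r 1)
  have := infIcc_le hf (x := 1) (s := r) (t := 1) ⟨h1, le_refl 1⟩
  rwa [hf.one] at this

lemma pre_one (hf : IsExcursion f) {r : ℝ} (h0 : 0 ≤ r) (h1 : r ≤ 1) :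
    pre f r 1 ↔ lm f r = 0 := by
  constructor
  · rintro ⟨-, h⟩
    rw [infIcc_one hf h1] at h
    exact le_antisymm h (lm_nn hf h0 h1)
  · intro h
    exact ⟨h1, by rw [h]; exact infIcc_nonneg hf r 1⟩

lemma mrcaSet_eq (hf : IsExcursion f) {u : ℝ} (hu : u ≤ 1) :
    {r : ℝ | 0 ≤ r ∧ pre f r u ∧ pre f r 1} = {r : ℝ | 0 ≤ r ∧ r ≤ u ∧ lm f r = 0} := by
  ext r
  constructor
  · rintro ⟨h0, hpu, hp1⟩
    exact ⟨h0, hpu.1, (pre_one hf h0 (hpu.1.trans hu)).1 hp1⟩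
  · rintro ⟨h0, hru, hl⟩
    exact ⟨h0, ⟨hru, by rw [hl]; exact infIcc_nonneg hf r u⟩,
      (pre_one hf h0 (hru.trans hu)).2 hl⟩

lemma mrcaSet_zero_mem (hf : IsExcursion f) {u : ℝ} (hu0 : 0 ≤ u) (hu1 : u ≤ 1) :
    (0:ℝ) ∈ {r : ℝ | 0 ≤ r ∧ pre f r u ∧ pre f r 1} := by
  rw [mrcaSet_eq hf hu1]
  exact ⟨le_refl 0, hu0, by simp [lm]⟩

lemma mrcaSet_bdd (hf : IsExcursion f) (u : ℝ) :
    BddAbove {r : ℝ | 0 ≤ r ∧ pre f r u ∧ pre f r 1} :=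
  ⟨u, fun r hr => hr.2.1.1⟩

lemma mrca_one_props (hf : IsExcursion f) {u : ℝ} (hu : u ∈ Set.Icc (0:ℝ) 1) :
    0 ≤ mrca f u 1 ∧ mrca f u 1 ≤ u ∧ lm f (mrca f u 1) = 0 := by
  have hAeq := mrcaSet_eq hf hu.2
  have hmem0 := mrcaSet_zero_mem hf hu.1 hu.2
  have hbdd := mrcaSet_bdd hf (f := f) u
  unfold mrca
  set A := {r : ℝ | 0 ≤ r ∧ pre f r u ∧ pre f r 1} with hA
  have h0 : 0 ≤ sSup A := le_csSup hbdd hmem0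
  have hle : sSup A ≤ u := csSup_le ⟨0, hmem0⟩ fun r hr => hr.2.1.1
  refine ⟨h0, hle, ?_⟩
  rcases eq_or_lt_of_le h0 with h | h
  · rw [← h]; simp [lm]
  · by_cases hMA : sSup A ∈ A
    · have : sSup A ∈ {r : ℝ | 0 ≤ r ∧ r ≤ u ∧ lm f r = 0} := by rw [← hAeq]; exact hMA
      exact this.2.2
    · set M := sSup A with hM
      have hM1 : M ≤ 1 := hle.trans hu.2
      have hLL : Tendsto f (𝓝[<] M) (𝓝 (Function.leftLim f M)) := hf.leftLimEx M ⟨h, hM1⟩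
      have key : ∀ ε : ℝ, 0 < ε → Function.leftLim f M ≤ ε := by
        intro ε hε
        have hfreq : ∃ᶠ x in 𝓝[<] M, f x < ε := by
          rw [Filter.frequently_iff]
          intro U hU
          obtain ⟨l, hl, hsub⟩ := mem_nhdsLT_iff_exists_Ioo_subset.1 hU
          have haM : max l 0 < M := max_lt hl h
          obtain ⟨r, hrA, har⟩ := exists_lt_of_lt_csSup ⟨0, hmem0⟩ haM
          have hrM : r ≤ M := le_csSup hbdd hrA
          have hrM' : r < M := lt_of_le_of_ne hrM fun e => hMA (e ▸ hrA)
          have hr0 : 0 < r := lt_of_le_of_lt (le_max_right l 0) har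
          have hrS : r ∈ {x : ℝ | 0 ≤ x ∧ x ≤ u ∧ lm f x = 0} := by rw [← hAeq]; exact hrA
          have hrlm : Function.leftLim f r = 0 := by
            have := hrS.2.2; rwa [lm, if_neg (ne_of_gt hr0)] at this
          have htd : Tendsto f (𝓝[<] r) (𝓝 0) :=
            hrlm ▸ hf.leftLimEx r ⟨hr0, hrS.2.1.trans hu.2⟩
          have hev : ∀ᶠ x in 𝓝[<] r, x ∈ Set.Ioo (max l 0) r ∧ f x < ε := by
            filter_upwards [Ioo_mem_nhdsLT har,
              htd.eventually (eventually_lt_nhds hε)] with x h1 h2 using ⟨h1, h2⟩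
          obtain ⟨x, hx, hfx⟩ := hev.exists
          exact ⟨x, hsub ⟨lt_of_le_of_lt (le_max_left l 0) hx.1, hx.2.trans hrM'⟩, hfx⟩
        have hfr := hLL.frequently (p := fun y => y < ε) hfreq
        by_contra hcon
        push_neg at hcon
        obtain ⟨y, hy1, hy2⟩ := (hfr.and_eventually (eventually_gt_nhds hcon)).exists
        exact absurd hy1 (not_lt.2 hy2.le)
      have hge : 0 ≤ Function.leftLim f M := by
        have := lm_nn hf h.le hM1; rwa [lm, if_neg (ne_of_gt h)] at this
      have hle0 : Function.leftLim f M ≤ 0 := by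
        have := le_of_forall_pos_le_add (a := Function.leftLim f M) (b := 0) (by simpa using key)
        simpa using this
      rw [lm, if_neg (ne_of_gt h)]
      exact le_antisymm hle0 hge

lemma pre_self (hf : IsExcursion f) {s : ℝ} (hs : s ∈ Set.Icc (0:ℝ) 1) : pre f s s := by
  refine ⟨le_refl s, ?_⟩
  have := hf.jump_nonneg s hs
  rw [jump] at this
  rw [infIcc_self]
  linarith

lemma mrca_pre_eq (hf : IsExcursion f) {s t : ℝ} (hs : s ∈ Set.Icc (0:ℝ) 1)
    (h : pre f s t) : mrca f s t = s := by
  unfold mrca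
  have hmem : s ∈ {r : ℝ | 0 ≤ r ∧ pre f r s ∧ pre f r t} := ⟨hs.1, pre_self hf hs, h⟩
  exact le_antisymm (csSup_le ⟨s, hmem⟩ fun r hr => hr.2.1.1)
    (le_csSup ⟨s, fun r hr => hr.2.1.1⟩ hmem)

lemma exists_anc (hf : IsExcursion f) {u r : ℝ} (hu : u ∈ Set.Icc (0:ℝ) 1)
    (hr : r < mrca f u 1) : ∃ r', r < r' ∧ r' ≤ u ∧ lm f r' = 0 := by
  unfold mrca at hr
  obtain ⟨r', hr'A, h⟩ := exists_lt_of_lt_csSup ⟨0, mrcaSet_zero_mem hf hu.1 hu.2⟩ hr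
  have : r' ∈ {x : ℝ | 0 ≤ x ∧ x ≤ u ∧ lm f x = 0} := by rw [← mrcaSet_eq hf hu.2]; exact hr'A
  exact ⟨r', h, this.2.1, this.2.2⟩

lemma dTanc_self (s : ℝ) : dTanc f s s = 0 := by
  unfold dTanc
  rw [infIcc_self]
  have h : ∀ r : ℝ, (if pre f s r ∧ s < r ∧ pre f r s then xst f r s else 0) = 0 := by
    intro r
    rw [if_neg]
    rintro ⟨-, h2, h3⟩
    exact absurd h3.1 (not_le.2 h2)
  rw [tsum_congr h, tsum_zero]
  ring

lemma dTanc_one (hf : IsExcursion f) {a : ℝ} (ha0 : 0 ≤ a) : dTanc f a 1 = 0 := by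
  unfold dTanc
  by_cases ha1 : a ≤ 1
  case neg =>
    have h : ∀ r : ℝ, (if pre f a r ∧ a < r ∧ pre f r 1 then xst f r 1 else 0) = 0 := by
      intro r
      rw [if_neg]
      rintro ⟨h1, h2, h3⟩
      exact ha1 (h1.1.trans h3.1)
    rw [tsum_congr h, tsum_zero, hf.one]
    rw [infIcc, Set.Icc_eq_empty (by intro hc; exact ha1 (hc.trans (le_refl 1)))]
    simp [Real.sInf_empty]
  case pos =>
  rw [hf.one, infIcc_one hf ha1]
  have h : ∀ r : ℝ, (if pre f a r ∧ a < r ∧ pre f r 1 then xst f r 1 else 0) = 0 := by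
    intro r
    split_ifs with hc
    · obtain ⟨h1, h2, h3⟩ := hc
      have hr0 : 0 ≤ r := ha0.trans h2.le
      have hlm : lm f r = 0 := (pre_one hf hr0 h3.1).1 h3
      rw [xst, if_pos h3.1, infIcc_one hf h3.1, hlm]
      norm_num
    · rfl
  rw [tsum_congr h, tsum_zero]
  ring

lemma xst_nonneg (f : ℝ → ℝ) (s t : ℝ) : 0 ≤ xst f s t := by
  rw [xst]; split_ifs
  · exact le_max_right _ _
  · exact le_refl 0

lemma xst_of_pre (h : pre f r b) : xst f r b = infIcc f r b - lm f r := by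
  rw [xst, if_pos h.1, max_eq_left (sub_nonneg.2 h.2)]

lemma sum_aux (hf : IsExcursion f) {b : ℝ} (hb : b ≤ 1) :
    ∀ F : Finset ℝ, (∀ r ∈ F, 0 < r ∧ pre f r b) → ∀ hne : F.Nonempty,
      ∑ r ∈ F, (infIcc f r b - lm f r) ≤ f b - lm f (F.min' hne) := by
  intro F
  induction F using Finset.strongInductionOn with
  | _ F ih =>
    intro hmem hne
    set b0 := F.min' hne with hb0def
    have hb0F : b0 ∈ F := F.min'_mem hne
    have hb0 := hmem b0 hb0F
    rcases Finset.eq_empty_or_nonempty (F.erase b0) with he | hne'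
    · rw [← Finset.add_sum_erase F _ hb0F, he, Finset.sum_empty]
      have hle : infIcc f b0 b ≤ f b := infIcc_le hf ⟨hb0.2.1, le_refl b⟩
      linarith
    · have hsub : F.erase b0 ⊂ F := Finset.erase_ssubset hb0F
      have ihyp := ih _ hsub (fun r hr => hmem r (Finset.mem_of_mem_erase hr)) hne'
      set b1 := (F.erase b0).min' hne' with hb1def
      have hb1F : b1 ∈ F.erase b0 := Finset.min'_mem _ _
      have hb1ne : b1 ≠ b0 := Finset.ne_of_mem_erase hb1F
      have hb1b := hmem b1 (Finset.mem_of_mem_erase hb1F)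
      have hb01 : b0 < b1 :=
        lt_of_le_of_ne (F.min'_le b1 (Finset.mem_of_mem_erase hb1F)) (Ne.symm hb1ne)
      have hinf : infIcc f b0 b ≤ lm f b1 :=
        infIcc_le_lm hf hb01 hb1b.2.1 hb1b.1 (hb1b.2.1.trans hb)
      rw [← Finset.add_sum_erase F _ hb0F]
      linarith

lemma summable_main (hf : IsExcursion f) {a b : ℝ} (ha : 0 ≤ a) (hb : b ≤ 1) :
    Summable (fun r : ℝ => if pre f a r ∧ a < r ∧ pre f r b then xst f r b else 0) := by
  apply summable_of_sum_le (c := f b)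
  · intro r
    dsimp only
    split_ifs
    · exact xst_nonneg f r b
    · exact le_refl 0
  · intro F
    rw [← Finset.sum_filter]
    set G := F.filter (fun r => pre f a r ∧ a < r ∧ pre f r b) with hG
    have hmem : ∀ r ∈ G, 0 < r ∧ pre f r b := by
      intro r hr
      have h := (Finset.mem_filter.1 hr).2
      exact ⟨lt_of_le_of_lt ha h.2.1, h.2.2⟩
    have hcong : ∑ r ∈ G, xst f r b = ∑ r ∈ G, (infIcc f r b - lm f r) :=
      Finset.sum_congr rfl fun r hr => xst_of_pre (hmem r hr).2
    rw [hcong]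
    rcases Finset.eq_empty_or_nonempty G with he | hne
    · rw [he, Finset.sum_empty]; exact f_nn hf b
    · have h1 := sum_aux hf hb G hmem hne
      have hmin := hmem _ (G.min'_mem hne)
      have h2 : 0 ≤ lm f (G.min' hne) := lm_nn hf hmin.1.le (hmin.2.1.trans hb)
      linarith

end Helper

theorem statement7 (f : ℝ → ℝ) (hf : IsExcursion f) (s t : ℝ)
    (hs : s ∈ Icc (0:ℝ) 1) (ht : t ∈ Icc (0:ℝ) 1) (hst : pre f s t) :
    dT f t 1 = dT f s 1 + dT f s t := by
  obtain ⟨hs0, hs1⟩ := hs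
  obtain ⟨ht0, ht1⟩ := ht
  obtain ⟨hM0, hMt, hMlm⟩ := Helper.mrca_one_props hf (u := t) ⟨ht0, ht1⟩
  obtain ⟨hm0, hms, hmlm⟩ := Helper.mrca_one_props hf (u := s) ⟨hs0, hs1⟩
  set M := mrca f t 1 with hMdef
  set m := mrca f s 1 with hmdef
  have e1 : dT f t 1 = dTanc f M t := by
    unfold dT
    rw [← hMdef, Helper.dTanc_one hf hM0]
    ring
  have e2 : dT f s 1 = dTanc f m s := by
    unfold dT
    rw [← hmdef, Helper.dTanc_one hf hm0]
    ring
  have e3 : dT f s t = dTanc f s t := by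
    unfold dT
    rw [Helper.mrca_pre_eq hf ⟨hs0, hs1⟩ hst, Helper.dTanc_self]
    ring
  rw [e1, e2, e3]
  rcases lt_or_ge s M with hsM | hMs
  · -- case B : s < M
    have hM0' : 0 < M := lt_of_le_of_lt hs0 hsM
    have hM1 : M ≤ 1 := hMt.trans ht1
    have hinf_st : infIcc f s t = 0 := Helper.infIcc_zero hf hsM hMt hM0' hM1 hMlm
    have hlms : lm f s = 0 := le_antisymm (hinf_st ▸ hst.2) (Helper.lm_nn hf hs0 hs1)
    have hm_eq : m = s := by
      rw [hmdef]
      exact Helper.mrca_pre_eq hf ⟨hs0, hs1⟩ ((Helper.pre_one hf hs0 hs1).2 hlms)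
    rw [hm_eq, Helper.dTanc_self, zero_add]
    have hsumG := Helper.summable_main hf (a := M) (b := t) hM0 ht1
    have hsumδ : Summable (fun r : ℝ => if r = M then infIcc f M t else 0) :=
      ⟨_, hasSum_ite_eq M _⟩
    have hterm : ∀ r : ℝ, (if pre f s r ∧ s < r ∧ pre f r t then xst f r t else 0)
        = (if pre f M r ∧ M < r ∧ pre f r t then xst f r t else 0)
          + (if r = M then infIcc f M t else 0) := by
      intro r
      rcases lt_trichotomy r M with hrM | hrM | hrM
      · rw [if_neg (fun h : pre f M r ∧ M < r ∧ pre f r t => absurd h.2.1 (not_lt.2 hrM.le)),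
          if_neg (ne_of_lt hrM), add_zero]
        by_cases hcond : pre f s r ∧ s < r ∧ pre f r t
        · obtain ⟨r', hrr', hr't, hr'lm⟩ := Helper.exists_anc hf (u := t) ⟨ht0, ht1⟩ hrM
          have hr'0 : 0 < r' := lt_of_le_of_lt (hs0.trans hcond.2.1.le) hrr'
          have h0inf : infIcc f r t = 0 :=
            Helper.infIcc_zero hf hrr' hr't hr'0 (hr't.trans ht1) hr'lm
          have hlmr : 0 ≤ lm f r :=
            Helper.lm_nn hf (hs0.trans hcond.2.1.le) (hcond.2.2.1.trans ht1)
          have hx0 : xst f r t = 0 := by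
            unfold xst
            rw [if_pos hcond.2.2.1, h0inf, zero_sub]
            exact max_eq_right (by linarith)
          rw [if_pos hcond, hx0]
        · rw [if_neg hcond]
      · subst hrM
        have hpsM : pre f s M := ⟨hsM.le, by rw [hlms]; exact Helper.infIcc_nonneg hf s M⟩
        have hpMt : pre f M t := ⟨hMt, by rw [hMlm]; exact Helper.infIcc_nonneg hf M t⟩
        have hxM : xst f M t = infIcc f M t := by
          unfold xst
          rw [if_pos hMt, hMlm, sub_zero]
          exact max_eq_left (Helper.infIcc_nonneg hf M t)
        rw [if_pos ⟨hpsM, hsM, hpMt⟩,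
          if_neg (fun h : pre f M M ∧ M < M ∧ pre f M t => lt_irrefl M h.2.1),
          if_pos rfl, zero_add, hxM]
      · have hne : r ≠ M := fun h => lt_irrefl M (h ▸ hrM)
        rw [if_neg hne, add_zero]
        have hsr : s < r := hsM.trans hrM
        by_cases hrt : pre f r t
        · rw [if_pos ⟨⟨hsr.le, by rw [hlms]; exact Helper.infIcc_nonneg hf s r⟩, hsr, hrt⟩,
            if_pos ⟨⟨hrM.le, by rw [hMlm]; exact Helper.infIcc_nonneg hf M r⟩, hrM, hrt⟩]
        · rw [if_neg (fun h : pre f s r ∧ s < r ∧ pre f r t => hrt h.2.2),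
            if_neg (fun h : pre f M r ∧ M < r ∧ pre f r t => hrt h.2.2)]
    unfold dTanc
    rw [hinf_st, tsum_congr hterm, Summable.tsum_add hsumG hsumδ, tsum_ite_eq]
    ring
  · -- case A : M ≤ s
    have hm_eq : m = M := by
      rw [hmdef, hMdef]
      unfold mrca
      apply le_antisymm
      · apply csSup_le ⟨0, Helper.mrcaSet_zero_mem hf hs0 hs1⟩
        intro r hr
        apply le_csSup (Helper.mrcaSet_bdd hf t)
        have hr' : r ∈ {x : ℝ | 0 ≤ x ∧ x ≤ s ∧ lm f x = 0} := by
          rw [← Helper.mrcaSet_eq hf hs1]; exact hr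
        rw [Helper.mrcaSet_eq hf ht1]
        exact ⟨hr'.1, hr'.2.1.trans hst.1, hr'.2.2⟩
      · apply csSup_le ⟨0, Helper.mrcaSet_zero_mem hf ht0 ht1⟩
        intro r hr
        apply le_csSup (Helper.mrcaSet_bdd hf s)
        have hr' : r ∈ {x : ℝ | 0 ≤ x ∧ x ≤ t ∧ lm f x = 0} := by
          rw [← Helper.mrcaSet_eq hf ht1]; exact hr
        have hrM : r ≤ mrca f t 1 := le_csSup (Helper.mrcaSet_bdd hf t) hr
        rw [Helper.mrcaSet_eq hf hs1]
        exact ⟨hr'.1, le_trans hrM (hMdef ▸ hMs), hr'.2.2⟩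
    rcases eq_or_lt_of_le hMs with heq | hMsl
    · rw [hm_eq, heq, Helper.dTanc_self]
      ring
    · -- A2 : M < s
      have hs0' : 0 < s := lt_of_le_of_lt hM0 hMsl
      have hinfMs_lm : infIcc f M s ≤ lm f s := Helper.infIcc_le_lm hf hMsl (le_refl s) hs0' hs1
      have hinfMt : infIcc f M t = infIcc f M s := by
        rw [Helper.infIcc_split hf hMsl.le hst.1]
        exact min_eq_left (hinfMs_lm.trans hst.2)
      have hsumF2 := Helper.summable_main hf (a := M) (b := s) hM0 hs1
      have hsumF3 := Helper.summable_main hf (a := s) (b := t) hs0 ht1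
      have hsumδ : Summable (fun r : ℝ => if r = s then infIcc f s t - f s else 0) :=
        ⟨_, hasSum_ite_eq s _⟩
      have hpss : pre f s s := Helper.pre_self hf ⟨hs0, hs1⟩
      have hterm : ∀ r : ℝ, (if pre f M r ∧ M < r ∧ pre f r t then xst f r t else 0)
          = ((if pre f M r ∧ M < r ∧ pre f r s then xst f r s else 0)
            + (if pre f s r ∧ s < r ∧ pre f r t then xst f r t else 0))
            + (if r = s then infIcc f s t - f s else 0) := by
        intro r
        rcases lt_trichotomy r s with hrs | hrs | hrs
        · rw [if_neg (fun h : pre f s r ∧ s < r ∧ pre f r t => absurd h.1.1 (not_le.2 hrs)),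
            if_neg (ne_of_lt hrs), add_zero, add_zero]
          by_cases hc : pre f M r ∧ M < r
          · have hinfeq : infIcc f r t = infIcc f r s := by
              rw [Helper.infIcc_split hf hrs.le hst.1]
              exact min_eq_left ((Helper.infIcc_le_lm hf hrs (le_refl s) hs0' hs1).trans hst.2)
            have hiff : pre f r t ↔ pre f r s := by
              constructor
              · rintro ⟨-, h2⟩; exact ⟨hrs.le, by rw [← hinfeq]; exact h2⟩
              · rintro ⟨-, h2⟩; exact ⟨hrs.le.trans hst.1, by rw [hinfeq]; exact h2⟩
            by_cases hrt : pre f r t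
            · have hxx : xst f r t = xst f r s := by
                unfold xst
                rw [if_pos hrt.1, if_pos hrs.le, hinfeq]
              rw [if_pos ⟨hc.1, hc.2, hrt⟩, if_pos ⟨hc.1, hc.2, hiff.1 hrt⟩, hxx]
            · rw [if_neg (fun h : pre f M r ∧ M < r ∧ pre f r t => hrt h.2.2),
                if_neg (fun h : pre f M r ∧ M < r ∧ pre f r s => hrt (hiff.2 h.2.2))]
          · rw [if_neg (fun h : pre f M r ∧ M < r ∧ pre f r t => hc ⟨h.1, h.2.1⟩),
              if_neg (fun h : pre f M r ∧ M < r ∧ pre f r s => hc ⟨h.1, h.2.1⟩)]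
        · subst hrs
          have hpMs : pre f M r := ⟨hMsl.le, by rw [hMlm]; exact Helper.infIcc_nonneg hf M r⟩
          rw [if_pos ⟨hpMs, hMsl, hst⟩, if_pos ⟨hpMs, hMsl, hpss⟩,
            if_neg (fun h : pre f r r ∧ r < r ∧ pre f r t => lt_irrefl r h.2.1),
            if_pos rfl, Helper.xst_of_pre hst, Helper.xst_of_pre hpss, Helper.infIcc_self]
          ring
        · rw [if_neg (ne_of_gt hrs), add_zero,
            if_neg (fun h : pre f M r ∧ M < r ∧ pre f r s => absurd h.2.2.1 (not_le.2 hrs)),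
            zero_add]
          by_cases hrt : pre f r t
          · have hMr : M < r := hMsl.trans hrs
            rw [if_pos ⟨⟨hMr.le, by rw [hMlm]; exact Helper.infIcc_nonneg hf M r⟩, hMr, hrt⟩,
              if_pos ⟨⟨hrs.le,
                le_trans hst.2 (Helper.infIcc_anti hf (le_refl s) hrt.1 hrs.le)⟩, hrs, hrt⟩]
          · rw [if_neg (fun h : pre f M r ∧ M < r ∧ pre f r t => hrt h.2.2),
              if_neg (fun h : pre f s r ∧ s < r ∧ pre f r t => hrt h.2.2)]
      rw [hm_eq]
      unfold dTanc
      rw [hinfMt, tsum_congr hterm, Summable.tsum_add (hsumF2.add hsumF3) hsumδ,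
        Summable.tsum_add hsumF2 hsumF3, tsum_ite_eq]
      ring
end
end

section
/- Let f be an excursion. If there exists a partition 0 = r_0 < r_1 < ... < r_n < r_{n+1} = 1 such that f is non-increasing on [r_i, r_{i+1}) for every 0 ≤ i ≤ n, then f is a pure jump growth (PJG) excursion, i.e. f(t) = ∑_{r ⪯_f t} x_r^t(f) for all t ∈ [0,1]. -/
open Set Filter Topology
open scoped Classical

noncomputable section

section AuxPJG

variable {f : ℝ → ℝ}

lemma exc_nonneg (hf : IsExcursion f) (s : ℝ) : 0 ≤ f s := by
  by_cases h : s ∈ Icc (0:ℝ) 1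
  · exact hf.nonneg s h
  · rw [hf.zero_outside s h]

lemma exc_bdd (hf : IsExcursion f) (S : Set ℝ) : BddBelow (f '' S) :=
  ⟨0, by rintro y ⟨x, -, rfl⟩; exact exc_nonneg hf x⟩

lemma infIcc_le (hf : IsExcursion f) {a b x : ℝ} (h : x ∈ Icc a b) : infIcc f a b ≤ f x :=
  csInf_le (exc_bdd hf _) ⟨x, h, rfl⟩

lemma infIcc_nonneg (hf : IsExcursion f) (a b : ℝ) : 0 ≤ infIcc f a b := by
  rcases (f '' Icc a b).eq_empty_or_nonempty with h | h
  · rw [infIcc, h, Real.sInf_empty]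
  · exact le_csInf h (by rintro y ⟨x, -, rfl⟩; exact exc_nonneg hf x)

lemma lm_tendsto_pos (hf : IsExcursion f) {s : ℝ} (hs : s ∈ Ioc (0:ℝ) 1) :
    Tendsto f (𝓝[<] s) (𝓝 (lm f s)) := by
  have h := hf.leftLimEx s hs
  rwa [lm, if_neg (ne_of_gt hs.1)]

lemma lm_nonneg (hf : IsExcursion f) (s : ℝ) : 0 ≤ lm f s := by
  rcases eq_or_ne s 0 with rfl | hs0
  · simp [lm]
  rcases lt_trichotomy s 0 with hs | hs | hs
  · have hz : Tendsto f (𝓝[<] s) (𝓝 (0:ℝ)) := by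
      apply Tendsto.congr' _ tendsto_const_nhds
      filter_upwards [self_mem_nhdsWithin] with u hu
      exact (hf.zero_outside u (fun hm => absurd (lt_of_le_of_lt hm.1 (hu.trans hs)) (lt_irrefl 0))).symm
    rw [lm, if_neg hs0, leftLim_eq_of_tendsto hz]
  · exact absurd hs hs0
  rcases le_or_gt s 1 with hs1 | hs1
  · exact ge_of_tendsto (lm_tendsto_pos hf ⟨hs, hs1⟩)
      (Eventually.of_forall fun u => exc_nonneg hf u)
  · have hz : Tendsto f (𝓝[<] s) (𝓝 (0:ℝ)) := by
      apply Tendsto.congr' _ tendsto_const_nhds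
      filter_upwards [Ioo_mem_nhdsLT_of_mem ⟨hs1, le_rfl⟩] with u hu
      exact (hf.zero_outside u (fun hm => absurd hm.2 (not_le.2 hu.1))).symm
    rw [lm, if_neg hs0, leftLim_eq_of_tendsto hz]

/-- If `f` is antitone on `[a,b)` and `s ∈ (a,b) ⊆ (0,1]`, the left limit dominates `f s`. -/
lemma lm_ge_interior (hf : IsExcursion f) {a b s : ℝ} (ha : 0 ≤ a) (hb : b ≤ 1)
    (hdec : AntitoneOn f (Ico a b)) (hs : s ∈ Ioo a b) : f s ≤ lm f s := by
  have hs01 : s ∈ Ioc (0:ℝ) 1 := ⟨lt_of_le_of_lt ha hs.1, le_trans hs.2.le hb⟩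
  refine ge_of_tendsto (lm_tendsto_pos hf hs01) ?_
  filter_upwards [Ioo_mem_nhdsLT_of_mem (show s ∈ Ioc a s from ⟨hs.1, le_rfl⟩)] with u hu
  exact hdec ⟨hu.1.le, hu.2.trans hs.2⟩ ⟨hs.1.le, hs.2⟩ hu.2.le


/-- For `f` antitone on `[a,b)` with `0 ≤ a < b ≤ 1`, `inf_{[a,b)} f = f(b-)`. -/
lemma inf_Ico_eq_lm (hf : IsExcursion f) {a b : ℝ} (ha : 0 ≤ a) (hab : a < b) (hb : b ≤ 1)
    (hdec : AntitoneOn f (Ico a b)) : sInf (f '' Ico a b) = lm f b := by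
  have hT := lm_tendsto_pos hf ⟨lt_of_le_of_lt ha hab, hb⟩
  apply le_antisymm
  · refine ge_of_tendsto hT ?_
    filter_upwards [Ioo_mem_nhdsLT_of_mem (show b ∈ Ioc a b from ⟨hab, le_rfl⟩)] with w hw
    exact csInf_le (exc_bdd hf _) ⟨w, ⟨hw.1.le, hw.2⟩, rfl⟩
  · refine le_csInf ⟨f a, a, ⟨le_rfl, hab⟩, rfl⟩ ?_
    rintro y ⟨u, hu, rfl⟩
    refine le_of_tendsto hT ?_
    filter_upwards [Ioo_mem_nhdsLT_of_mem (show b ∈ Ioc u b from ⟨hu.2, le_rfl⟩)] with w hw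
    exact hdec hu ⟨le_trans hu.1 hw.1.le, hw.2⟩ hw.1.le

/-- Splitting the infimum over `[a,c]` at `b`. -/
lemma inf_split (hf : IsExcursion f) {a b c : ℝ} (hab : a < b) (hbc : b ≤ c) :
    infIcc f a c = min (sInf (f '' Ico a b)) (infIcc f b c) := by
  rw [infIcc, ← Ico_union_Icc_eq_Icc hab.le hbc, image_union,
    csInf_union (exc_bdd hf _) ((nonempty_Ico.2 hab).image f)
      (exc_bdd hf _) ((nonempty_Icc.2 hbc).image f)]
  rfl

/-- If `f` is antitone on `[a,b)` and `a ≤ t < b` then `inf_{[a,t]} f = f t`. -/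
lemma inf_piece (hf : IsExcursion f) {a b t : ℝ} (hdec : AntitoneOn f (Ico a b))
    (hat : a ≤ t) (htb : t < b) : infIcc f a t = f t := by
  apply le_antisymm (infIcc_le hf ⟨hat, le_rfl⟩)
  refine le_csInf ⟨f t, t, ⟨hat, le_rfl⟩, rfl⟩ ?_
  rintro y ⟨u, hu, rfl⟩
  exact hdec ⟨hu.1, lt_of_le_of_lt hu.2 htb⟩ ⟨hat, htb⟩ hu.2

end AuxPJG


theorem statement8 (f : ℝ → ℝ) (hf : IsExcursion f) (n : ℕ) (r : ℕ → ℝ)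
    (h0 : r 0 = 0) (hlast : r (n + 1) = 1)
    (hmono : ∀ i ≤ n, r i < r (i + 1))
    (hdec : ∀ i ≤ n, AntitoneOn f (Ico (r i) (r (i + 1)))) :
    IsPJG f := by
  -- basic facts about the partition
  have hr_lt : ∀ j, ∀ i, i < j → j ≤ n + 1 → r i < r j := by
    intro j
    induction j with
    | zero => intro i hi _; omega
    | succ m ih =>
      intro i hi hj
      have hm : m ≤ n := by omega
      rcases Nat.lt_or_ge i m with h | h
      · exact lt_trans (ih i h (by omega)) (hmono m hm)
      · have : i = m := by omega
        subst this; exact hmono i hm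
  have hr_le : ∀ i j, i ≤ j → j ≤ n + 1 → r i ≤ r j := by
    intro i j hij hj
    rcases Nat.lt_or_ge i j with h | h
    · exact (hr_lt j i h hj).le
    · have : i = j := by omega
      subst this; exact le_rfl
  have hr_nonneg : ∀ i, i ≤ n + 1 → 0 ≤ r i := fun i hi => h0 ▸ hr_le 0 i (Nat.zero_le i) hi
  have hr_le1 : ∀ i, i ≤ n + 1 → r i ≤ 1 := fun i hi => hlast ▸ hr_le i (n + 1) hi le_rfl
  intro t ht
  by_cases ht1 : t = 1
  · -- at t = 1 both sides vanish
    subst ht1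
    rw [hf.one, Jop]
    symm
    have hz : ∀ s : ℝ, (if pre f s 1 then xst f s 1 else 0) = 0 := by
      intro s
      by_cases hp : pre f s 1
      · rw [if_pos hp, xst, if_pos hp.1]
        apply max_eq_right
        rw [sub_nonpos]
        calc infIcc f s 1 ≤ f 1 := infIcc_le hf ⟨hp.1, le_rfl⟩
          _ = 0 := hf.one
          _ ≤ lm f s := lm_nonneg hf s
      · rw [if_neg hp]
    simp only [hz, tsum_zero]
  -- now t ∈ [0, 1)
  have ht' : t < 1 := lt_of_le_of_ne ht.2 ht1
  set k := Nat.findGreatest (fun i => r i ≤ t) n with hk_def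
  have hk_le : k ≤ n := Nat.findGreatest_le n
  have hrk : r k ≤ t := Nat.findGreatest_spec (P := fun i => r i ≤ t) (Nat.zero_le n) (show r 0 ≤ t by rw [h0]; exact ht.1)
  have htk1 : t < r (k + 1) := by
    rcases eq_or_ne k n with h | h
    · rw [h, hlast]; exact ht'
    · by_contra hc
      push_neg at hc
      exact Nat.findGreatest_is_greatest (Nat.lt_succ_self k)
        (Nat.succ_le_of_lt (lt_of_le_of_ne hk_le h)) hc
  set g : ℕ → ℝ := fun i => infIcc f (r i) t with hg_def
  -- the value of each term at a partition point
  have hterm : ∀ i ≤ k, (if pre f (r i) t then xst f (r i) t else 0)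
      = g i - min (lm f (r i)) (g i) := by
    intro i hi
    have hrit : r i ≤ t := le_trans (hr_le i k hi (by omega)) hrk
    by_cases hp : pre f (r i) t
    · rw [if_pos hp, xst, if_pos hrit, min_eq_left hp.2, max_eq_left (sub_nonneg.2 hp.2)]
    · rw [if_neg hp]
      have hlt : ¬ lm f (r i) ≤ g i := fun h => hp ⟨hrit, h⟩
      push_neg at hlt
      rw [min_eq_right hlt.le, sub_self]
  have hmin0 : min (lm f (r 0)) (g 0) = 0 := by
    rw [h0]
    have : lm f 0 = 0 := by rw [lm, if_pos rfl]
    rw [this, min_eq_left (infIcc_nonneg hf _ _)]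
  have hchain : ∀ i, i + 1 ≤ k → min (lm f (r (i + 1))) (g (i + 1)) = g i := by
    intro i hi
    have hin : i ≤ n := by omega
    have h1 : r i < r (i + 1) := hmono i hin
    have h2 : r (i + 1) ≤ t := le_trans (hr_le (i + 1) k hi (by omega)) hrk
    have := inf_split hf h1 h2 (f := f)
    rw [hg_def]
    simp only
    rw [inf_split hf h1 h2,
      inf_Ico_eq_lm hf (hr_nonneg i (by omega)) h1 (hr_le1 (i + 1) (by omega)) (hdec i hin)]
  have hgk : g k = f t := inf_piece hf (hdec k hk_le) hrk htk1
  -- support of the sum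
  have hsupp : ∀ s : ℝ, s ∉ (Finset.range (k + 1)).image r →
      (if pre f s t then xst f s t else 0) = 0 := by
    intro s hs
    by_cases hp : pre f s t
    swap
    · rw [if_neg hp]
    rw [if_pos hp, xst, if_pos hp.1]
    apply max_eq_right
    rw [sub_nonpos]
    rcases lt_trichotomy s 0 with hs0 | hs0 | hs0
    · calc infIcc f s t ≤ f s := infIcc_le hf ⟨le_rfl, hp.1⟩
        _ = 0 := hf.zero_outside s (fun hm => absurd (lt_of_le_of_lt hm.1 hs0) (lt_irrefl 0))
        _ ≤ lm f s := lm_nonneg hf s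
    · exact absurd (Finset.mem_image.2 ⟨0, Finset.mem_range.2 (Nat.succ_pos k),
        by rw [h0, hs0]⟩) hs
    · -- s ∈ (0, t], not a partition point: locate its piece
      set j := Nat.findGreatest (fun i => r i < s) k with hj_def
      have hj_le : j ≤ k := Nat.findGreatest_le k
      have hrj : r j < s := Nat.findGreatest_spec (P := fun i => r i < s) (Nat.zero_le k) (show r 0 < s by rw [h0]; exact hs0)
      have hsj1 : s < r (j + 1) := by
        by_contra hc
        push_neg at hc
        rcases eq_or_ne j k with h | h
        · have : r (k + 1) ≤ t := le_trans (by rw [← h]; exact hc) hp.1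
          exact absurd this (not_le.2 htk1)
        · have hj1k : j + 1 ≤ k := Nat.succ_le_of_lt (lt_of_le_of_ne hj_le h)
          have : ¬ r (j + 1) < s :=
            Nat.findGreatest_is_greatest (Nat.lt_succ_self j) hj1k
          have hse : s = r (j + 1) := le_antisymm (not_lt.1 this) hc
          exact absurd (Finset.mem_image.2 ⟨j + 1,
            Finset.mem_range.2 (by omega), hse.symm⟩) hs
      have hjn : j ≤ n := le_trans hj_le hk_le
      have hlm : f s ≤ lm f s :=
        lm_ge_interior hf (hr_nonneg j (by omega)) (hr_le1 (j + 1) (by omega))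
          (hdec j hjn) ⟨hrj, hsj1⟩
      exact le_trans (infIcc_le hf ⟨le_rfl, hp.1⟩) hlm
  -- put everything together
  have hinj : ∀ i ∈ Finset.range (k + 1), ∀ i' ∈ Finset.range (k + 1), r i = r i' → i = i' := by
    intro i hi i' hi' hrr
    rw [Finset.mem_range] at hi hi'
    rcases lt_trichotomy i i' with h | h | h
    · exact absurd hrr (ne_of_lt (hr_lt i' i h (by omega)))
    · exact h
    · exact absurd hrr.symm (ne_of_lt (hr_lt i i' h (by omega)))
  rw [Jop, tsum_eq_sum hsupp, Finset.sum_image hinj]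
  rw [Finset.sum_congr rfl (fun i hi => hterm i (Nat.lt_succ_iff.1 (Finset.mem_range.1 hi)))]
  rw [Finset.sum_sub_distrib]
  have hsum2 : ∑ i ∈ Finset.range (k + 1), min (lm f (r i)) (g i)
      = ∑ i ∈ Finset.range k, g i := by
    rw [Finset.sum_range_succ', hmin0, add_zero]
    exact Finset.sum_congr rfl fun i hi => hchain i (Nat.succ_le_of_lt (Finset.mem_range.1 hi))
  rw [hsum2, Finset.sum_range_succ, add_sub_cancel_left, hgk]
end
end
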